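/- arXiv:1907.07364 — 8 statements merged into one kernel-verified Lean document; each statement's English description precedes it below -/
import Mathlib

section
/- For a vector of positive multiplicities β of length a with Σ_{i=1}^a i·β_i = k, the sum over all compositions α = (α_1,...,α_l) of k satisfying #{j : α_j = i} = β_i for each i, of 1/(α_1·(α_1+α_2)···(α_1+...+α_l)), equals 1/(∏_{i=1}^a i^{β_i}·β_i!). -/
open Finset

private lemma sum_values (a L : ℕ) (β : ℕ → ℕ) (α : Fin L → Fin (a+1))
    (hα : ∀ i : Fin (a+1), (univ.filter (fun j => α j = i)).card = β i) :
    ∑ j : Fin L, ((α j : ℕ) : ℚ) = ∑ i ∈ range (a+1), (i : ℚ) * (β i : ℚ) := by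
  have h1 : ∑ j : Fin L, ((α j : ℕ) : ℚ)
      = ∑ i : Fin (a+1), ∑ j ∈ univ.filter (fun j => α j = i), ((α j : ℕ) : ℚ) :=
    (Finset.sum_fiberwise_of_maps_to (fun j _ => mem_univ (α j)) _).symm
  rw [h1, ← Fin.sum_univ_eq_sum_range (fun i => (i : ℚ) * (β i : ℚ)) (a+1)]
  refine Finset.sum_congr rfl fun i _ => ?_
  rw [Finset.sum_congr rfl (fun j hj => by rw [(mem_filter.1 hj).2]),
    Finset.sum_const, hα i, nsmul_eq_mul, mul_comm]

private lemma count_snoc (a L : ℕ) (α' : Fin L → Fin (a+1)) (x i : Fin (a+1)) :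
    ((univ : Finset (Fin (L+1))).filter
        (fun j => (Fin.snoc α' x : Fin (L+1) → Fin (a+1)) j = i)).card
      = ((univ : Finset (Fin L)).filter (fun j => α' j = i)).card
        + if x = i then 1 else 0 := by
  simp only [Finset.card_filter]
  rw [Fin.sum_univ_castSucc]
  simp [Fin.snoc_castSucc, Fin.snoc_last]

private lemma partial_sum_castSucc (a L : ℕ) (α : Fin (L+1) → Fin (a+1)) (j : Fin L) :
    ∑ j' ∈ univ.filter (fun j' => j' ≤ Fin.castSucc j), ((α j' : ℕ) : ℚ)
      = ∑ j' ∈ univ.filter (fun j' => j' ≤ j), ((α (Fin.castSucc j') : ℕ) : ℚ) := by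
  rw [Finset.sum_filter, Finset.sum_filter, Fin.sum_univ_castSucc]
  have h1 : ¬ (Fin.last L ≤ Fin.castSucc j) := not_le.mpr (Fin.castSucc_lt_last j)
  simp [h1, Fin.castSucc_le_castSucc_iff]

private lemma main_aux (a : ℕ) : ∀ (L k : ℕ) (β : ℕ → ℕ),
    β 0 = 0 → (∀ i, a < i → β i = 0) →
    (∑ i ∈ range (a + 1), i * β i = k) →
    (L = ∑ i ∈ range (a + 1), β i) →
    ∑ α ∈ (univ : Finset (Fin L → Fin (a + 1))).filter
        (fun α => ∀ i : Fin (a + 1),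
          (univ.filter (fun j => α j = i)).card = β i),
      (∏ j : Fin L, ∑ j' ∈ univ.filter (fun j' => j' ≤ j), ((α j' : ℕ) : ℚ))⁻¹
      = (∏ i ∈ range (a + 1), (i : ℚ) ^ (β i) * (Nat.factorial (β i) : ℚ))⁻¹ := by
  intro L
  induction L with
  | zero =>
    intro k β hβ0 hsupp hk hL
    have hβ : ∀ i ∈ range (a+1), β i = 0 := Finset.sum_eq_zero_iff.mp hL.symm
    have hfilter : ((univ : Finset (Fin 0 → Fin (a+1))).filter
        (fun α => ∀ i : Fin (a+1), (univ.filter (fun j => α j = i)).card = β i)) = univ := by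
      refine Finset.filter_true_of_mem fun α _ i => ?_
      have : β (i : ℕ) = 0 := hβ i (mem_range.mpr i.isLt)
      simp [this]
    have hR : ∏ i ∈ range (a+1), (i : ℚ) ^ (β i) * (Nat.factorial (β i) : ℚ) = 1 :=
      Finset.prod_eq_one fun i hi => by simp [hβ i hi]
    rw [hfilter, hR]
    simp
  | succ L ih =>
    intro k β hβ0 hsupp hk hL
    have hk0 : k ≠ 0 := by
      intro h
      have h2 : ∀ i ∈ range (a+1), β i = 0 := by
        intro i hi
        rcases Nat.eq_zero_or_pos i with h0 | h1
        · rw [h0]; exact hβ0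
        · have h3 := (Finset.sum_eq_zero_iff.mp (h ▸ hk)) i hi
          rcases Nat.mul_eq_zero.mp h3 with h4 | h4
          · omega
          · exact h4
      rw [Finset.sum_eq_zero h2] at hL; omega
    have hkQ : ∑ i ∈ range (a+1), (i:ℚ) * (β i:ℚ) = (k:ℚ) := by
      rw [← hk]; push_cast; ring
    set P : ℚ := ∏ i ∈ range (a + 1), (i : ℚ) ^ (β i) * (Nat.factorial (β i) : ℚ) with hP
    have hPpos : 0 < P := by
      refine Finset.prod_pos fun i _ => ?_
      rcases Nat.eq_zero_or_pos i with h0 | h1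
      · rw [h0]; simp [hβ0]
      · exact mul_pos (pow_pos (by exact_mod_cast h1) _)
          (by exact_mod_cast Nat.factorial_pos _)
    have hP0 : P ≠ 0 := ne_of_gt hPpos
    have hkQ0 : (k:ℚ) ≠ 0 := Nat.cast_ne_zero.mpr hk0
    rw [Finset.sum_filter, ← Equiv.sum_comp (Fin.snocEquiv (fun _ => Fin (a + 1))),
      Fintype.sum_prod_type]
    simp only [Fin.snocEquiv_apply]
    trans (∑ x : Fin (a + 1), ((x : ℕ) : ℚ) * ((β (x : ℕ)) : ℚ) / ((k : ℚ) * P))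
    · refine Finset.sum_congr rfl fun x _ => ?_
      by_cases hx : β (x : ℕ) = 0
      · trans (0:ℚ)
        · refine Finset.sum_eq_zero fun α' _ => if_neg fun hcondx => ?_
          have h2 := hcondx x
          rw [count_snoc] at h2
          rw [if_pos rfl] at h2
          omega
        · rw [hx]; simp
      · have hi0a : (x : ℕ) ≤ a := by
          by_contra h; exact hx (hsupp _ (by omega))
        have hi01 : 1 ≤ (x : ℕ) := by
          rcases Nat.eq_zero_or_pos (x : ℕ) with h | h
          · exact absurd (by rw [h]; exact hβ0) hx
          · exact h
        obtain ⟨m, hm⟩ := Nat.exists_eq_succ_of_ne_zero hx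
        have hm' : β (x : ℕ) = m + 1 := hm
        set β' : ℕ → ℕ := fun j => if j = (x : ℕ) then m else β j with hβ'
        have hb1 : β' (x : ℕ) = m := if_pos rfl
        have hb2 : ∀ j : ℕ, j ≠ (x : ℕ) → β' j = β j := fun j hj => if_neg hj
        have hmem : (x : ℕ) ∈ range (a+1) := mem_range.mpr (by omega)
        have hcond : ∀ α' : Fin L → Fin (a+1),
            (∀ i : Fin (a+1), ((univ : Finset (Fin (L+1))).filter
                (fun j => (Fin.snoc α' x : Fin (L+1) → Fin (a+1)) j = i)).card = β i)
            ↔ (∀ i : Fin (a+1),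
                ((univ : Finset (Fin L)).filter (fun j => α' j = i)).card = β' i) := by
          intro α'
          constructor
          · intro h i
            have h2 := h i
            rw [count_snoc] at h2
            by_cases hix : x = i
            · subst hix
              rw [if_pos rfl] at h2
              omega
            · rw [if_neg hix, add_zero] at h2
              rw [hb2 (i : ℕ) (fun hh => hix (Fin.ext hh.symm))]
              exact h2
          · intro h i
            rw [count_snoc]
            have h2 := h i
            by_cases hix : x = i
            · subst hix
              rw [if_pos rfl]
              omega
            · rw [if_neg hix, add_zero]
              rwa [hb2 (i : ℕ) (fun hh => hix (Fin.ext hh.symm))] at h2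
        have hsum1 : ∑ i ∈ range (a+1), i * β i
            = (x : ℕ) * β (x : ℕ) + ∑ i ∈ (range (a+1)).erase (x : ℕ), i * β i :=
          (Finset.add_sum_erase _ _ hmem).symm
        have hsum2 : ∑ i ∈ range (a+1), i * β' i
            = (x : ℕ) * m + ∑ i ∈ (range (a+1)).erase (x : ℕ), i * β i := by
          rw [← Finset.add_sum_erase _ (fun i => i * β' i) hmem]
          congr 1
          · rw [hb1]
          · exact Finset.sum_congr rfl fun i hi => by
              rw [hb2 i (Finset.ne_of_mem_erase hi)]
        have hsum3 : ∑ i ∈ range (a+1), β i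
            = β (x : ℕ) + ∑ i ∈ (range (a+1)).erase (x : ℕ), β i :=
          (Finset.add_sum_erase _ _ hmem).symm
        have hsum4 : ∑ i ∈ range (a+1), β' i
            = m + ∑ i ∈ (range (a+1)).erase (x : ℕ), β i := by
          rw [← Finset.add_sum_erase _ β' hmem, hb1]
          exact congrArg (fun t => m + t) (Finset.sum_congr rfl fun i hi => by
            rw [hb2 i (Finset.ne_of_mem_erase hi)])
        have hk' : ∑ i ∈ range (a+1), i * β' i = k - (x : ℕ) := by
          rw [hsum2]
          rw [hsum1, hm'] at hk
          have hexp : (x : ℕ) * (m + 1) = (x : ℕ) * m + (x : ℕ) := by ring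
          omega
        have hL' : L = ∑ i ∈ range (a+1), β' i := by
          rw [hsum4]
          rw [hsum3, hm'] at hL
          omega
        have hβ'0 : β' 0 = 0 := by
          rw [hb2 0 (by omega)]; exact hβ0
        have hsupp' : ∀ i, a < i → β' i = 0 := fun i hi => by
          rw [hb2 i (by omega)]; exact hsupp i hi
        have hIH := ih (k - (x : ℕ)) β' hβ'0 hsupp' hk' hL'
        have hprod : ∀ α' : Fin L → Fin (a+1),
            (∀ i : Fin (a+1), ((univ : Finset (Fin (L+1))).filter
                (fun j => (Fin.snoc α' x : Fin (L+1) → Fin (a+1)) j = i)).card = β i) →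
            (∏ j : Fin (L+1), ∑ j' ∈ univ.filter (fun j' => j' ≤ j),
                (((Fin.snoc α' x : Fin (L+1) → Fin (a+1)) j' : ℕ) : ℚ))
            = (∏ j : Fin L, ∑ j' ∈ univ.filter (fun j' => j' ≤ j), ((α' j' : ℕ) : ℚ))
              * (k:ℚ) := by
          intro α' hQ
          rw [Fin.prod_univ_castSucc]
          congr 1
          · refine Finset.prod_congr rfl fun j _ => ?_
            rw [partial_sum_castSucc]
            exact Finset.sum_congr rfl fun j' _ => by rw [Fin.snoc_castSucc]
          · rw [Finset.filter_true_of_mem (fun j _ => Fin.le_last j),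
              sum_values a (L+1) β _ hQ, hkQ]
        have hfac : (∏ i ∈ range (a+1), (i:ℚ) ^ (β' i) * (Nat.factorial (β' i) : ℚ))
            * (((x : ℕ):ℚ) * ((β (x : ℕ) : ℕ):ℚ)) = P := by
          rw [hP, ← Finset.mul_prod_erase (range (a+1))
              (fun i : ℕ => (i:ℚ)^(β i) * (Nat.factorial (β i):ℚ)) hmem,
            ← Finset.mul_prod_erase (range (a+1))
              (fun i : ℕ => (i:ℚ)^(β' i) * (Nat.factorial (β' i):ℚ)) hmem]
          have hrest : ∏ i ∈ (range (a+1)).erase (x : ℕ),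
                (i:ℚ) ^ (β' i) * (Nat.factorial (β' i) : ℚ)
              = ∏ i ∈ (range (a+1)).erase (x : ℕ),
                (i:ℚ) ^ (β i) * (Nat.factorial (β i) : ℚ) :=
            Finset.prod_congr rfl fun i hi => by
              rw [hb2 i (Finset.ne_of_mem_erase hi)]
          rw [hrest, hb1, hm']
          push_cast [Nat.factorial_succ, pow_succ]
          ring
        have hib : (((x : ℕ):ℚ) * ((β (x : ℕ) : ℕ):ℚ)) ≠ 0 := by
          have h1 : (0:ℚ) < ((x : ℕ):ℚ) := by exact_mod_cast hi01
          have h2 : (0:ℚ) < ((β (x : ℕ) : ℕ):ℚ) := by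
            rw [hm']; positivity
          positivity
        have hPdiv : (∏ i ∈ range (a+1), (i:ℚ) ^ (β' i) * (Nat.factorial (β' i) : ℚ))
            = P / (((x : ℕ):ℚ) * ((β (x : ℕ) : ℕ):ℚ)) := (eq_div_iff hib).mpr hfac
        trans ((k:ℚ)⁻¹ * (∏ i ∈ range (a+1), (i:ℚ) ^ (β' i) * (Nat.factorial (β' i) : ℚ))⁻¹)
        · rw [← hIH, Finset.sum_filter, Finset.mul_sum]
          refine Finset.sum_congr rfl fun α' _ => ?_
          by_cases hq : (∀ i : Fin (a+1),
              ((univ : Finset (Fin L)).filter (fun j => α' j = i)).card = β' i)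
          · rw [if_pos hq, if_pos ((hcond α').mpr hq), hprod α' ((hcond α').mpr hq), mul_inv]
            ring
          · rw [if_neg hq, if_neg (fun hh => hq ((hcond α').mp hh)), mul_zero]
        · rw [hPdiv]
          field_simp
          try ring
    · rw [← Finset.sum_div,
        Fin.sum_univ_eq_sum_range (fun i => (i:ℚ) * ((β i):ℚ)) (a+1), hkQ]
      rw [div_eq_iff (by positivity)]
      field_simp

/-- **Lemma (harmonic sum over compositions).**
For a multiplicity vector `β` (with `β 0 = 0`, supported on `1..a`) with
`∑ i * β i = k`, the sum over all compositions `α` of `k` whose part `i`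
appears exactly `β i` times of `1/(α₁(α₁+α₂)⋯(α₁+⋯+α_l))` equals
`1/(∏ i, i^(β i) * (Nat.factorial (β i) : ℚ))`.  Compositions of length `L = ∑ β i` are encoded
as functions `Fin L → Fin (a+1)`. -/
theorem composition_harmonic_sum (a k : ℕ) (β : ℕ → ℕ)
    (hβ0 : β 0 = 0) (hsupp : ∀ i, a < i → β i = 0)
    (hk : ∑ i ∈ Finset.range (a + 1), i * β i = k)
    (L : ℕ) (hL : L = ∑ i ∈ Finset.range (a + 1), β i) :
    ∑ α ∈ (Finset.univ : Finset (Fin L → Fin (a + 1))).filter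
        (fun α => ∀ i : Fin (a + 1),
          (Finset.univ.filter (fun j => α j = i)).card = β i),
      (∏ j : Fin L, ∑ j' ∈ Finset.univ.filter (fun j' => j' ≤ j),
          ((α j' : ℕ) : ℚ))⁻¹
      = (∏ i ∈ Finset.range (a + 1), (i : ℚ) ^ (β i) * (Nat.factorial (β i) : ℚ))⁻¹ := by
  exact main_aux a L k β hβ0 hsupp hk hL
end

section
/- Equivalently stated: for a given vector β with Σ i·β_i = k, the harmonic mean of the products α_1(α_1+α_2)···(α_1+···+α_l) over all compositions α of k with part multiplicities β is equal to (Σ_i β_i)! · ∏_i i^{β_i}. -/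
open Finset



lemma snoc_fiber_card {n m : ℕ} (α : Fin n → Fin (m+1)) (i c : Fin (m+1)) :
    (univ.filter (fun j : Fin (n+1) => (Fin.snoc α i : Fin (n+1) → Fin (m+1)) j = c)).card
      = (univ.filter (fun j : Fin n => α j = c)).card + if i = c then 1 else 0 := by
  rw [Finset.card_filter, Finset.card_filter, Fin.sum_univ_castSucc]
  simp [Fin.snoc_castSucc, Fin.snoc_last]

lemma prefix_sum_castSucc {n : ℕ} (f : Fin (n+1) → ℚ) (j : Fin n) :
    ∑ j' ∈ univ.filter (fun j' => j' ≤ Fin.castSucc j), f j'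
      = ∑ j' ∈ univ.filter (fun j' => j' ≤ j), f (Fin.castSucc j') := by
  rw [Finset.sum_filter, Finset.sum_filter, Fin.sum_univ_castSucc]
  have h1 : ¬ (Fin.last n ≤ Fin.castSucc j) := by
    simp [Fin.le_def]
  simp [Fin.castSucc_le_castSucc_iff, h1]

lemma total_sum {n m : ℕ} (α : Fin n → Fin (m+1)) (β : ℕ → ℕ)
    (hα : ∀ i : Fin (m+1), (univ.filter (fun j => α j = i)).card = β i) :
    ∑ j, ((α j : ℕ) : ℚ) = ∑ i ∈ range (m+1), (i : ℚ) * β i := by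
  rw [← Finset.sum_fiberwise univ (fun j => α j) (fun j => ((α j : ℕ) : ℚ))]
  rw [← Fin.sum_univ_eq_sum_range (fun i => (i:ℚ) * β i) (m+1)]
  refine Finset.sum_congr rfl fun i _ => ?_
  have h : ∀ j ∈ univ.filter (fun j => α j = i), ((α j : ℕ) : ℚ) = ((i : ℕ) : ℚ) := by
    intro j hj
    simp only [mem_filter] at hj
    rw [hj.2]
  rw [Finset.sum_congr rfl h, Finset.sum_const, hα i, nsmul_eq_mul, mul_comm]

lemma update_prod_eq {M : Type*} [CommMonoid M] {s : Finset ℕ} {i : ℕ} (h : i ∈ s)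
    (β : ℕ → ℕ) (b : ℕ) (g : ℕ → ℕ → M) :
    ∏ j ∈ s, g j (Function.update β i b j) = g i b * ∏ j ∈ s.erase i, g j (β j) := by
  rw [← Finset.mul_prod_erase s (fun j => g j (Function.update β i b j)) h,
    Function.update_self]
  exact congrArg _ (Finset.prod_congr rfl fun j hj => by
    rw [Function.update_of_ne (Finset.ne_of_mem_erase hj)])

lemma update_sum_eq {s : Finset ℕ} {i : ℕ} (h : i ∈ s)
    (β : ℕ → ℕ) (b : ℕ) (g : ℕ → ℕ → ℕ) :
    ∑ j ∈ s, g j (Function.update β i b j) = g i b + ∑ j ∈ s.erase i, g j (β j) := by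
  rw [← Finset.add_sum_erase s (fun j => g j (Function.update β i b j)) h,
    Function.update_self]
  exact congrArg _ (Finset.sum_congr rfl fun j hj => by
    rw [Function.update_of_ne (Finset.ne_of_mem_erase hj)])

lemma key (a : ℕ) : ∀ (L : ℕ) (β : ℕ → ℕ) (k : ℕ),
    β 0 = 0 → (∀ i, a < i → β i = 0) →
    (∑ i ∈ range (a+1), i * β i = k) → (∑ i ∈ range (a+1), β i = L) →
    ((univ.filter (fun α : Fin L → Fin (a+1) => ∀ i : Fin (a+1),
        (univ.filter (fun j => α j = i)).card = β i)).card
        * ∏ i ∈ range (a+1), (β i).factorial = L.factorial) ∧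
    ((∑ α ∈ univ.filter (fun α : Fin L → Fin (a+1) => ∀ i : Fin (a+1),
        (univ.filter (fun j => α j = i)).card = β i),
        (∏ j : Fin L, ∑ j' ∈ univ.filter (fun j' => j' ≤ j), ((α j' : ℕ) : ℚ))⁻¹)
      * ((∏ i ∈ range (a+1), ((β i).factorial : ℚ))
          * ∏ i ∈ range (a+1), (i : ℚ) ^ (β i)) = 1) := by
  intro L
  induction L with
  | zero =>
    intro β k hβ0 hsupp hk hlen
    have hβall : ∀ i ∈ range (a+1), β i = 0 := Finset.sum_eq_zero_iff.mp hlen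
    have hfilt : (univ.filter (fun α : Fin 0 → Fin (a+1) => ∀ i : Fin (a+1),
        (univ.filter (fun j => α j = i)).card = β i)) = univ := by
      refine Finset.filter_true_of_mem fun α _ => fun i => ?_
      have : (univ : Finset (Fin 0)) = ∅ := rfl
      rw [hβall i (mem_range.mpr i.isLt)]
      simp
    have hcard : (univ : Finset (Fin 0 → Fin (a+1))).card = 1 := by
      rw [Finset.card_univ, Fintype.card_fun]
      simp
    constructor
    · rw [hfilt, hcard, one_mul]
      rw [Finset.prod_congr rfl (fun i hi => by rw [hβall i hi])]
      simp [Nat.factorial]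
    · rw [hfilt]
      have h1 : ∀ α : Fin 0 → Fin (a+1),
          (∏ j : Fin 0, ∑ j' ∈ univ.filter (fun j' => j' ≤ j), ((α j' : ℕ) : ℚ))⁻¹ = 1 := by
        intro α; simp
      rw [Finset.sum_congr rfl (fun α _ => h1 α), Finset.sum_const, hcard]
      have p1 : ∏ i ∈ range (a+1), ((β i).factorial : ℚ) = 1 :=
        Finset.prod_eq_one fun i hi => by rw [hβall i hi]; norm_num [Nat.factorial]
      have p2 : ∏ i ∈ range (a+1), (i:ℚ) ^ (β i) = 1 :=
        Finset.prod_eq_one fun i hi => by rw [hβall i hi]; norm_num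
      rw [p1, p2]; simp
  | succ L IH =>
    intro β k hβ0 hsupp hk hlen
    set S : Finset (Fin (L+1) → Fin (a+1)) :=
      univ.filter (fun α => ∀ i : Fin (a+1), (univ.filter (fun j => α j = i)).card = β i)
      with hSdef
    have hkne : k ≠ 0 := by
      intro hk0
      have hz : ∀ i ∈ range (a+1), i * β i = 0 := Finset.sum_eq_zero_iff.mp (hk0 ▸ hk)
      have hz2 : ∀ i ∈ range (a+1), β i = 0 := by
        intro i hi
        rcases Nat.eq_zero_or_pos i with h | h
        · rw [h]; exact hβ0
        · rcases Nat.mul_eq_zero.mp (hz i hi) with h3 | h3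
          · omega
          · exact h3
      rw [Finset.sum_eq_zero hz2] at hlen
      omega
    have main : ∀ i : Fin (a+1),
        ((S.filter (fun α => α (Fin.last L) = i)).card * ∏ j ∈ range (a+1), (β j).factorial
            = β (i:ℕ) * L.factorial) ∧
        ((∑ α ∈ S.filter (fun α => α (Fin.last L) = i),
            (∏ j : Fin (L+1), ∑ j' ∈ univ.filter (fun j' => j' ≤ j), ((α j' : ℕ) : ℚ))⁻¹)
          * ((∏ j ∈ range (a+1), ((β j).factorial : ℚ)) * ∏ j ∈ range (a+1), (j : ℚ) ^ (β j))
          = (k : ℚ)⁻¹ * (((i:ℕ) : ℚ) * (β (i:ℕ) : ℚ))) := by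
      intro i
      by_cases hβi : β (i:ℕ) = 0
      · have hemp : S.filter (fun α => α (Fin.last L) = i) = ∅ := by
          rw [Finset.eq_empty_iff_forall_notMem]
          intro α hα
          rw [Finset.mem_filter, hSdef, Finset.mem_filter] at hα
          obtain ⟨⟨-, hcond⟩, hlast⟩ := hα
          have h1 := hcond i
          rw [hβi, Finset.card_eq_zero] at h1
          have h2 : Fin.last L ∈ univ.filter (fun j => α j = i) := by
            simp [hlast]
          rw [h1] at h2
          exact absurd h2 (Finset.notMem_empty _)
        rw [hemp]
        simp [hβi]
      · have hia : (i:ℕ) ∈ range (a+1) := mem_range.mpr i.isLt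
        have hi0 : (i:ℕ) ≠ 0 := fun h => hβi (by rw [h, hβ0])
        set β' : ℕ → ℕ := Function.update β (i:ℕ) (β (i:ℕ) - 1) with hβ'def
        have hβ'0 : β' 0 = 0 := by
          rw [hβ'def, Function.update_of_ne (Ne.symm hi0)]
          exact hβ0
        have hβ'supp : ∀ j, a < j → β' j = 0 := by
          intro j hj
          have hji : j ≠ (i:ℕ) := by have := mem_range.mp hia; omega
          rw [hβ'def, Function.update_of_ne hji]
          exact hsupp j hj
        have herase_len : β (i:ℕ) + ∑ j ∈ (range (a+1)).erase (i:ℕ), β j = L + 1 := by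
          rw [Finset.add_sum_erase _ _ hia]; exact hlen
        have hlen' : ∑ j ∈ range (a+1), β' j = L := by
          rw [hβ'def, update_sum_eq hia β _ (fun _ x => x)]
          omega
        have herase_k : (i:ℕ) * β (i:ℕ) + ∑ j ∈ (range (a+1)).erase (i:ℕ), j * β j = k := by
          rw [Finset.add_sum_erase _ (fun j => j * β j) hia]; exact hk
        obtain ⟨m, hm⟩ := Nat.exists_eq_succ_of_ne_zero hβi
        have hk'' : (∑ j ∈ range (a+1), j * β' j) + (i:ℕ) = k := by
          rw [hβ'def, update_sum_eq hia β _ (fun j x => j * x)]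
          have hmm : (i:ℕ) * (β (i:ℕ) - 1) + (i:ℕ) = (i:ℕ) * β (i:ℕ) := by
            rw [hm, Nat.succ_sub_one, Nat.mul_succ]
          omega
        obtain ⟨IH1, IH2⟩ := IH β' (∑ j ∈ range (a+1), j * β' j) hβ'0 hβ'supp rfl hlen'
        set S' : Finset (Fin L → Fin (a+1)) :=
          univ.filter (fun α' => ∀ c : Fin (a+1), (univ.filter (fun j => α' j = c)).card = β' c)
          with hS'def
        have hfwd : ∀ α ∈ S.filter (fun α => α (Fin.last L) = i), Fin.init α ∈ S' := by
          intro α hα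
          rw [Finset.mem_filter, hSdef, Finset.mem_filter] at hα
          obtain ⟨⟨-, hcond⟩, hlast⟩ := hα
          have hα_eq : (Fin.snoc (Fin.init α) i : Fin (L+1) → Fin (a+1)) = α := by
            rw [← hlast]; exact Fin.snoc_init_self α
          rw [hS'def, Finset.mem_filter]
          refine ⟨mem_univ _, fun c => ?_⟩
          have h1 := snoc_fiber_card (Fin.init α) i c
          simp only [hα_eq] at h1
          rw [hcond c] at h1
          rw [hβ'def, Function.update_apply]
          by_cases hc : i = c
          · subst hc
            rw [if_pos rfl] at h1
            rw [if_pos rfl]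
            omega
          · have hc' : ¬((c:ℕ) = (i:ℕ)) := fun h => hc (Fin.val_inj.mp h).symm
            rw [if_neg hc, add_zero] at h1
            rw [if_neg hc']
            omega
        have hbwd : ∀ α' ∈ S',
            (Fin.snoc α' i : Fin (L+1) → Fin (a+1)) ∈ S.filter (fun α => α (Fin.last L) = i) := by
          intro α' hα'
          rw [hS'def, Finset.mem_filter] at hα'
          obtain ⟨-, hcond'⟩ := hα'
          rw [Finset.mem_filter, hSdef, Finset.mem_filter]
          refine ⟨⟨mem_univ _, fun c => ?_⟩, Fin.snoc_last _ _⟩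
          rw [snoc_fiber_card α' i c, hcond' c, hβ'def, Function.update_apply]
          by_cases hc : i = c
          · subst hc
            rw [if_pos rfl, if_pos rfl]
            omega
          · have hc' : ¬((c:ℕ) = (i:ℕ)) := fun h => hc (Fin.val_inj.mp h).symm
            rw [if_neg hc, if_neg hc', add_zero]
        have hli : ∀ α ∈ S.filter (fun α => α (Fin.last L) = i),
            (Fin.snoc (Fin.init α) i : Fin (L+1) → Fin (a+1)) = α := by
          intro α hα
          rw [Finset.mem_filter] at hα
          rw [← hα.2]
          exact Fin.snoc_init_self α
        have hri : ∀ α' ∈ S', Fin.init (Fin.snoc α' i : Fin (L+1) → Fin (a+1)) = α' :=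
          fun α' _ => by simp
        have hkQ : ((k:ℕ) : ℚ) = ∑ j ∈ range (a+1), (j:ℚ) * (β j : ℚ) := by
          rw [← hk]; push_cast; ring
        have hval : ∀ α ∈ S.filter (fun α => α (Fin.last L) = i),
            (∏ j : Fin (L+1), ∑ j' ∈ univ.filter (fun j' => j' ≤ j), ((α j' : ℕ) : ℚ))⁻¹
            = (k:ℚ)⁻¹ *
              (∏ j : Fin L, ∑ j' ∈ univ.filter (fun j' => j' ≤ j), ((Fin.init α j' : ℕ) : ℚ))⁻¹ := by
          intro α hα
          rw [Finset.mem_filter, hSdef, Finset.mem_filter] at hα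
          obtain ⟨⟨-, hcond⟩, hlast⟩ := hα
          rw [Fin.prod_univ_castSucc]
          have hlastsum : ∑ j' ∈ univ.filter (fun j' => j' ≤ Fin.last L), ((α j' : ℕ) : ℚ)
              = (k:ℚ) := by
            rw [Finset.filter_true_of_mem (fun x _ => Fin.le_last x), total_sum α β hcond, ← hkQ]
          have hpre : ∀ j : Fin L,
              ∑ j' ∈ univ.filter (fun j' => j' ≤ Fin.castSucc j), ((α j' : ℕ) : ℚ)
              = ∑ j' ∈ univ.filter (fun j' => j' ≤ j), ((Fin.init α j' : ℕ) : ℚ) := by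
            intro j
            rw [prefix_sum_castSucc (fun j' => ((α j' : ℕ) : ℚ)) j]
            rfl
          rw [hlastsum, Finset.prod_congr rfl (fun j _ => hpre j), mul_inv, mul_comm]
        have hcard_fib : (S.filter (fun α => α (Fin.last L) = i)).card = S'.card :=
          Finset.card_nbij' (fun α => Fin.init α) (fun α' => Fin.snoc α' i) hfwd hbwd hli hri
        have hfact : ∏ j ∈ range (a+1), (β j).factorial
            = β (i:ℕ) * ∏ j ∈ range (a+1), (β' j).factorial := by
          rw [hβ'def, update_prod_eq hia β _ (fun _ x => x.factorial),
            ← Finset.mul_prod_erase (range (a+1)) (fun j => (β j).factorial) hia,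
            ← mul_assoc, Nat.mul_factorial_pred hβi]
        have hfactQ : ∏ j ∈ range (a+1), ((β j).factorial : ℚ)
            = (β (i:ℕ) : ℚ) * ∏ j ∈ range (a+1), ((β' j).factorial : ℚ) := by
          exact_mod_cast congrArg (fun n : ℕ => (n : ℚ)) hfact
        have hpow : ∏ j ∈ range (a+1), (j : ℚ) ^ (β j)
            = ((i:ℕ) : ℚ) * ∏ j ∈ range (a+1), (j : ℚ) ^ (β' j) := by
          rw [hβ'def, update_prod_eq hia β _ (fun j x => (j:ℚ) ^ x),
            ← Finset.mul_prod_erase (range (a+1)) (fun j => (j:ℚ) ^ (β j)) hia,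
            ← mul_assoc]
          congr 1
          rw [hm, Nat.succ_sub_one, pow_succ]
          ring
        have hsum_fib : ∑ α ∈ S.filter (fun α => α (Fin.last L) = i),
            (∏ j : Fin (L+1), ∑ j' ∈ univ.filter (fun j' => j' ≤ j), ((α j' : ℕ) : ℚ))⁻¹
            = (k:ℚ)⁻¹ * ∑ α' ∈ S',
                (∏ j : Fin L, ∑ j' ∈ univ.filter (fun j' => j' ≤ j), ((α' j' : ℕ) : ℚ))⁻¹ := by
          rw [Finset.mul_sum]
          exact Finset.sum_nbij' (fun α => Fin.init α) (fun α' => Fin.snoc α' i)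
            hfwd hbwd hli hri hval
        constructor
        · rw [hcard_fib, hfact,
            show S'.card * (β (i:ℕ) * ∏ j ∈ range (a+1), (β' j).factorial)
              = β (i:ℕ) * (S'.card * ∏ j ∈ range (a+1), (β' j).factorial) from by ring,
            IH1]
        · rw [hsum_fib, hfactQ, hpow]
          linear_combination ((k:ℚ))⁻¹ * ((i:ℕ) : ℚ) * ((β (i:ℕ) : ℕ) : ℚ) * IH2
    constructor
    · have hcards : S.card = ∑ i : Fin (a+1), (S.filter (fun α => α (Fin.last L) = i)).card :=
        Finset.card_eq_sum_card_fiberwise (fun x _ => mem_univ _)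
      rw [hcards, Finset.sum_mul, Finset.sum_congr rfl (fun i _ => (main i).1),
        ← Finset.sum_mul, Fin.sum_univ_eq_sum_range (fun j => β j) (a+1), hlen,
        Nat.factorial_succ]
    · rw [← Finset.sum_fiberwise S (fun α => α (Fin.last L))
          (fun α => (∏ j : Fin (L+1), ∑ j' ∈ univ.filter (fun j' => j' ≤ j),
            ((α j' : ℕ) : ℚ))⁻¹),
        Finset.sum_mul, Finset.sum_congr rfl (fun i _ => (main i).2),
        ← Finset.mul_sum]
      have hks : ∑ i : Fin (a+1), (((i:ℕ) : ℚ) * (β (i:ℕ) : ℚ)) = (k:ℚ) := by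
        rw [Fin.sum_univ_eq_sum_range (fun j => ((j:ℚ) * (β j : ℚ))) (a+1), ← hk]
        push_cast; ring
      rw [hks, inv_mul_cancel₀ (by exact_mod_cast hkne)]


/-- **Harmonic-mean form.**  For a multiplicity vector `β` with `∑ i * β i = k`,
the harmonic mean of the products `α₁(α₁+α₂)⋯(α₁+⋯+α_l)` over all compositions
`α` of `k` whose part `i` appears exactly `β i` times equals
`(∑ β i)! * ∏ i ^ (β i)`.  Compositions of length `L = ∑ β i` are encoded as
functions `Fin L → Fin (a+1)`; the harmonic mean of `x₁,…,x_m` is `m / ∑ 1/xⱼ`. -/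
theorem composition_harmonic_mean (a k : ℕ) (β : ℕ → ℕ)
    (hβ0 : β 0 = 0) (hsupp : ∀ i, a < i → β i = 0)
    (hk : ∑ i ∈ Finset.range (a + 1), i * β i = k)
    (L : ℕ) (hL : L = ∑ i ∈ Finset.range (a + 1), β i)
    (S : Finset (Fin L → Fin (a + 1)))
    (hS : S = (Finset.univ : Finset (Fin L → Fin (a + 1))).filter
        (fun α => ∀ i : Fin (a + 1),
          (Finset.univ.filter (fun j => α j = i)).card = β i)) :
    (S.card : ℚ) /
      (∑ α ∈ S, (∏ j : Fin L, ∑ j' ∈ Finset.univ.filter (fun j' => j' ≤ j),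
          ((α j' : ℕ) : ℚ))⁻¹)
      = (Nat.factorial L : ℚ) * ∏ i ∈ Finset.range (a + 1), (i : ℚ) ^ (β i) := by
  subst hS
  obtain ⟨h1, h2⟩ := key a L β k hβ0 hsupp hk hL.symm
  set Sf : Finset (Fin L → Fin (a+1)) :=
    univ.filter (fun α => ∀ i : Fin (a + 1),
      (univ.filter (fun j => α j = i)).card = β i) with hSf
  set sm : ℚ := ∑ α ∈ Sf, (∏ j : Fin L, ∑ j' ∈ univ.filter (fun j' => j' ≤ j),
      ((α j' : ℕ) : ℚ))⁻¹ with hsm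
  set A : ℚ := ∏ i ∈ range (a+1), ((β i).factorial : ℚ) with hA
  set B : ℚ := ∏ i ∈ range (a+1), (i : ℚ) ^ (β i) with hB
  have hsne : sm ≠ 0 := by
    intro h
    rw [h, zero_mul] at h2
    exact zero_ne_one h2
  have hcardA : (Sf.card : ℚ) * A = (L.factorial : ℚ) := by
    have := congrArg (fun n : ℕ => (n : ℚ)) h1
    push_cast at this
    rw [hA]
    exact_mod_cast this
  rw [div_eq_iff hsne]
  linear_combination B * sm * hcardA - (Sf.card : ℚ) * h2
end

section
/- Let f_k(n) denote the number of unordered factorizations of n into exactly k parts, each part ≥ 2. Then for n ≥ 2 and k ≥ 1, k·f_k(n) = Σ f_{k-i}(n/d^i), where the sum is over all pairs (d, i) with d ≥ 2, i ≥ 1 and d^i dividing n; with boundary condition f_0(1) = 1 and f_k(1) = 0 for k ≥ 1. -/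
open Finset

/-- `numFactorizations k n` is the number of unordered factorizations of `n` into
exactly `k` parts, each part `≥ 2`: multisets of cardinality `k` of integers `≥ 2`
with product `n`.  In particular `numFactorizations 0 1 = 1` and
`numFactorizations k 1 = 0` for `k ≥ 1`. -/
noncomputable def numFactorizations (k n : ℕ) : ℕ :=
  Nat.card {s : Multiset ℕ // Multiset.card s = k ∧ (∀ x ∈ s, 2 ≤ x) ∧ s.prod = n}

/-- The finite set of factorizations of `n` into `k` parts `≥ 2`. -/
def factSet (k n : ℕ) : Finset (Multiset ℕ) :=
  ((k • (Finset.range (n+1)).val).powerset.toFinset).filter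
    (fun s => Multiset.card s = k ∧ (∀ x ∈ s, 2 ≤ x) ∧ s.prod = n)

lemma mem_factSet {k n : ℕ} (hn : 1 ≤ n) {s : Multiset ℕ} :
    s ∈ factSet k n ↔ Multiset.card s = k ∧ (∀ x ∈ s, 2 ≤ x) ∧ s.prod = n := by
  constructor
  · intro h; exact (Finset.mem_filter.mp h).2
  · intro h
    refine Finset.mem_filter.mpr ⟨?_, h⟩
    rw [Multiset.mem_toFinset, Multiset.mem_powerset, Multiset.le_iff_count]
    intro x
    by_cases hx : x ∈ s
    · have hxn : x ≤ n := Nat.le_of_dvd hn (h.2.2 ▸ Multiset.dvd_prod hx)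
      have h1 : x ∈ (Finset.range (n+1)).val := by
        simp [Finset.mem_range]; omega
      have h2 : 1 ≤ Multiset.count x (Finset.range (n+1)).val :=
        Multiset.one_le_count_iff_mem.mpr h1
      calc Multiset.count x s ≤ Multiset.card s := Multiset.count_le_card x s
        _ = k := h.1
        _ ≤ k * Multiset.count x (Finset.range (n+1)).val := Nat.le_mul_of_pos_right k h2
        _ = Multiset.count x (k • (Finset.range (n+1)).val) := by
            rw [Multiset.count_nsmul]
    · simp [Multiset.count_eq_zero_of_notMem hx]

lemma numFact_eq {k n : ℕ} (hn : 1 ≤ n) :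
    numFactorizations k n = (factSet k n).card := by
  have h : {s : Multiset ℕ | Multiset.card s = k ∧ (∀ x ∈ s, 2 ≤ x) ∧ s.prod = n}
      = ↑(factSet k n) := by
    ext s; simp only [Set.mem_setOf_eq, Finset.coe_filter, Finset.mem_coe]
    rw [mem_factSet hn]
  rw [numFactorizations, ← Set.ncard_coe_finset, ← h, ← Nat.card_coe_set_eq]
  rfl

lemma filter_card_eq {k n d i : ℕ} (hn : 1 ≤ n) (hd : 2 ≤ d) (hik : i ≤ k)
    (hdvd : d ^ i ∣ n) :
    ((factSet k n).filter (fun s => i ≤ s.count d)).card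
      = (factSet (k - i) (n / d ^ i)).card := by
  have hdpos : 0 < d ^ i := Nat.pow_pos (by omega)
  have hq : 1 ≤ n / d ^ i := Nat.div_pos (Nat.le_of_dvd hn hdvd) hdpos
  apply Finset.card_bij' (fun s _ => s - Multiset.replicate i d)
    (fun t _ => t + Multiset.replicate i d)
  · intro s hs
    obtain ⟨hs, hcount⟩ := Finset.mem_filter.mp hs
    obtain ⟨hcard, h2, hprod⟩ := (mem_factSet hn).mp hs
    have hle : Multiset.replicate i d ≤ s :=
      Multiset.le_count_iff_replicate_le.mp hcount
    have hdec : s - Multiset.replicate i d + Multiset.replicate i d = s :=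
      tsub_add_cancel_of_le hle
    rw [mem_factSet hq]
    refine ⟨?_, ?_, ?_⟩
    · rw [Multiset.card_sub hle, Multiset.card_replicate, hcard]
    · intro x hx
      exact h2 x (Multiset.mem_of_le (Multiset.sub_le_self _ _) hx)
    · have hmul : (s - Multiset.replicate i d).prod * d ^ i = n := by
        calc (s - Multiset.replicate i d).prod * d ^ i
            = (s - Multiset.replicate i d).prod * (Multiset.replicate i d).prod := by
              rw [Multiset.prod_replicate]
          _ = (s - Multiset.replicate i d + Multiset.replicate i d).prod := by
              rw [Multiset.prod_add]
          _ = n := by rw [hdec, hprod]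
      rw [← hmul, Nat.mul_div_cancel _ hdpos]
  · intro t ht
    obtain ⟨hcard, h2, hprod⟩ := (mem_factSet hq).mp ht
    refine Finset.mem_filter.mpr ⟨(mem_factSet hn).mpr ⟨?_, ?_, ?_⟩, ?_⟩
    · rw [Multiset.card_add, Multiset.card_replicate, hcard]; omega
    · intro x hx
      rcases Multiset.mem_add.mp hx with hx | hx
      · exact h2 x hx
      · rw [Multiset.eq_of_mem_replicate hx]; exact hd
    · rw [Multiset.prod_add, Multiset.prod_replicate, hprod, Nat.div_mul_cancel hdvd]
    · rw [Multiset.count_add, Multiset.count_replicate_self]; omega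
  · intro s hs
    obtain ⟨_, hcount⟩ := Finset.mem_filter.mp hs
    exact tsub_add_cancel_of_le (Multiset.le_count_iff_replicate_le.mp hcount)
  · intro t ht
    simp

lemma filter_card_empty {k n d i : ℕ} (hn : 1 ≤ n) (hdvd : ¬ d ^ i ∣ n) :
    (factSet k n).filter (fun s => i ≤ s.count d) = ∅ := by
  ext s
  simp only [Finset.mem_filter, Finset.notMem_empty, iff_false, not_and]
  intro hs hcount
  obtain ⟨hcard, h2, hprod⟩ := (mem_factSet hn).mp hs
  have hle : Multiset.replicate i d ≤ s :=
    Multiset.le_count_iff_replicate_le.mp hcount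
  have hdd : (Multiset.replicate i d).prod ∣ s.prod := Multiset.prod_dvd_prod_of_le hle
  rw [Multiset.prod_replicate, hprod] at hdd
  exact hdvd hdd

/-- **Recursion for `f_k(n)`:** for `n ≥ 2` and `k ≥ 1`,
`k · f_k(n) = ∑ f_{k-i}(n / d^i)`, summed over pairs `(d, i)` with `d ≥ 2`,
`1 ≤ i ≤ k` and `d^i ∣ n` (terms with `i > k` vanish since `f` with negative
index is `0`). -/
theorem numFactorizations_recursion (n k : ℕ) (hn : 2 ≤ n) (hk : 1 ≤ k) :
    k * numFactorizations k n =
      ∑ d ∈ Finset.Icc 2 n, ∑ i ∈ Finset.Icc 1 k,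
        if d ^ i ∣ n then numFactorizations (k - i) (n / d ^ i) else 0 := by
  have hn1 : 1 ≤ n := by omega
  have key : ∀ d ∈ Finset.Icc 2 n, ∀ i ∈ Finset.Icc 1 k,
      (if d ^ i ∣ n then numFactorizations (k - i) (n / d ^ i) else 0)
        = ((factSet k n).filter (fun s => i ≤ s.count d)).card := by
    intro d hd i hi
    rw [Finset.mem_Icc] at hd hi
    by_cases hdvd : d ^ i ∣ n
    · have hdpos : 0 < d ^ i := Nat.pow_pos (by omega)
      have hq : 1 ≤ n / d ^ i := Nat.div_pos (Nat.le_of_dvd hn1 hdvd) hdpos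
      rw [if_pos hdvd, numFact_eq hq, filter_card_eq hn1 hd.1 hi.2 hdvd]
    · rw [if_neg hdvd, filter_card_empty hn1 hdvd, Finset.card_empty]
  rw [Finset.sum_congr rfl (fun d hd => Finset.sum_congr rfl (key d hd))]
  have step : ∀ d i, ((factSet k n).filter (fun s => i ≤ s.count d)).card
      = ∑ s ∈ factSet k n, if i ≤ s.count d then 1 else 0 :=
    fun d i => Finset.card_filter _ _
  simp_rw [step]
  rw [Finset.sum_congr rfl (fun d _ => Finset.sum_comm), Finset.sum_comm]
  have hinner : ∀ s ∈ factSet k n,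
      ∑ d ∈ Finset.Icc 2 n, ∑ i ∈ Finset.Icc 1 k,
        (if i ≤ s.count d then 1 else 0) = k := by
    intro s hs
    obtain ⟨hcard, h2, hprod⟩ := (mem_factSet hn1).mp hs
    have hcount : ∀ d, s.count d ≤ k := fun d => hcard ▸ Multiset.count_le_card d s
    have hI : ∀ d, ∑ i ∈ Finset.Icc 1 k, (if i ≤ s.count d then 1 else 0)
        = s.count d := by
      intro d
      rw [← Finset.card_filter]
      have hfe : (Finset.Icc 1 k).filter (fun i => i ≤ s.count d)
          = Finset.Icc 1 (s.count d) := by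
        ext j
        simp only [Finset.mem_filter, Finset.mem_Icc]
        constructor
        · rintro ⟨⟨h1, _⟩, h3⟩; exact ⟨h1, h3⟩
        · rintro ⟨h1, h3⟩; exact ⟨⟨h1, le_trans h3 (hcount d)⟩, h3⟩
      rw [hfe, Nat.card_Icc]; omega
    simp_rw [hI]
    have hsub : s.toFinset ⊆ Finset.Icc 2 n := by
      intro x hx
      rw [Multiset.mem_toFinset] at hx
      rw [Finset.mem_Icc]
      exact ⟨h2 x hx, Nat.le_of_dvd hn1 (hprod ▸ Multiset.dvd_prod hx)⟩
    rw [← Finset.sum_subset hsub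
      (fun x _ hx => Multiset.count_eq_zero_of_notMem (by simpa using hx))]
    rw [Multiset.toFinset_sum_count_eq, hcard]
  rw [Finset.sum_congr rfl hinner, Finset.sum_const, smul_eq_mul,
    numFact_eq hn1, Nat.mul_comm]
end

section
/- Let g_k(n) denote the number of factorizations of n into exactly k pairwise distinct parts, each ≥ 2. Then for n ≥ 2 and k ≥ 1, k·g_k(n) = Σ (-1)^{i+1} g_{k-i}(n/d^i), summed over pairs (d, i) with d ≥ 2, i ≥ 1 and d^i | n; with g_0(1) = 1 and g_k(1) = 0 for k ≥ 1. -/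
open Finset

/-- `numDistinctFactorizations k n` is the number of factorizations of `n` into
exactly `k` pairwise distinct parts, each `≥ 2`: finite sets of `k` integers `≥ 2`
with product `n`.  In particular `numDistinctFactorizations 0 1 = 1` and
`numDistinctFactorizations k 1 = 0` for `k ≥ 1`. -/
noncomputable def numDistinctFactorizations (k n : ℕ) : ℕ :=
  Nat.card {s : Finset ℕ // s.card = k ∧ (∀ x ∈ s, 2 ≤ x) ∧ ∏ x ∈ s, x = n}

namespace NDFaux

def F (k n : ℕ) : Finset (Finset ℕ) :=
  (Finset.Iic n).powerset.filter (fun s => s.card = k ∧ (∀ x ∈ s, 2 ≤ x) ∧ ∏ x ∈ s, x = n)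

lemma mem_F {k n : ℕ} (hn : 1 ≤ n) {s : Finset ℕ} :
    s ∈ F k n ↔ s.card = k ∧ (∀ x ∈ s, 2 ≤ x) ∧ ∏ x ∈ s, x = n := by
  constructor
  · exact fun h => (mem_filter.mp h).2
  · intro h
    refine mem_filter.mpr ⟨mem_powerset.mpr fun x hx => ?_, h⟩
    exact mem_Iic.mpr (Nat.le_of_dvd hn (h.2.2 ▸ dvd_prod_of_mem _ hx))

lemma g_eq {k n : ℕ} (hn : 1 ≤ n) :
    numDistinctFactorizations k n = (F k n).card := by
  have h1 : numDistinctFactorizations k n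
      = Set.ncard {s : Finset ℕ | s.card = k ∧ (∀ x ∈ s, 2 ≤ x) ∧ ∏ x ∈ s, x = n} :=
    Nat.card_coe_set_eq _
  rw [h1]
  have h2 : {s : Finset ℕ | s.card = k ∧ (∀ x ∈ s, 2 ≤ x) ∧ ∏ x ∈ s, x = n} = ↑(F k n) := by
    ext s
    simp only [Set.mem_setOf_eq, Finset.mem_coe, mem_F hn]
  rw [h2, Set.ncard_coe_finset]

def A (n k i d : ℕ) : Finset (Finset ℕ) :=
  if d ^ i ∣ n then (F (k - i) (n / d ^ i)).filter (fun s => d ∉ s) else ∅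

def B (n k i d : ℕ) : Finset (Finset ℕ) :=
  if d ^ i ∣ n then (F (k - i) (n / d ^ i)).filter (fun s => d ∈ s) else ∅

lemma mem_A {n k i d : ℕ} {s : Finset ℕ} :
    s ∈ A n k i d ↔ d ^ i ∣ n ∧ s ∈ F (k - i) (n / d ^ i) ∧ d ∉ s := by
  unfold A; split_ifs with h <;> simp [h, mem_filter]

lemma mem_B {n k i d : ℕ} {s : Finset ℕ} :
    s ∈ B n k i d ↔ d ^ i ∣ n ∧ s ∈ F (k - i) (n / d ^ i) ∧ d ∈ s := by
  unfold B; split_ifs with h <;> simp [h, mem_filter]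

lemma card_F_split {n k i d : ℕ} (h : d ^ i ∣ n) :
    (F (k - i) (n / d ^ i)).card = (A n k i d).card + (B n k i d).card := by
  rw [A, B, if_pos h, if_pos h, add_comm]
  exact (Finset.card_filter_add_card_filter_not (p := fun s => d ∈ s)).symm

lemma B_card_top {n k d : ℕ} : (B n k k d).card = 0 := by
  rw [Finset.card_eq_zero, Finset.eq_empty_iff_forall_notMem]
  intro s hs
  rw [mem_B] at hs
  obtain ⟨h1, hsF, hds⟩ := hs
  have hc : s.card = k - k := (mem_filter.mp hsF).2.1
  have : s = ∅ := Finset.card_eq_zero.mp (by omega)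
  subst this
  simp at hds

lemma B_card {n k i d : ℕ} (hn : 2 ≤ n) (hd : 2 ≤ d) (hik : i < k) :
    (B n k i d).card = (A n k (i + 1) d).card := by
  have hd0 : 0 < d := by omega
  have hn0 : 0 < n := by omega
  by_cases h1 : d ^ i ∣ n
  swap
  · have h2 : ¬ d ^ (i + 1) ∣ n := fun h => h1 (dvd_trans (pow_dvd_pow d (Nat.le_succ i)) h)
    simp [A, B, h1, h2]
  have hq1 : 1 ≤ n / d ^ i :=
    (Nat.one_le_div_iff (pow_pos hd0 i)).mpr (Nat.le_of_dvd hn0 h1)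
  have key : ∀ s ∈ B n k i d, d ^ (i + 1) ∣ n ∧ ∏ x ∈ s.erase d, x = n / d ^ (i + 1) := by
    intro s hs
    rw [mem_B] at hs
    obtain ⟨-, hsF, hds⟩ := hs
    rw [mem_F hq1] at hsF
    have hprod : d * ∏ x ∈ s.erase d, x = n / d ^ i :=
      (Finset.mul_prod_erase s (fun x => x) hds).trans hsF.2.2
    have hdvd : d ∣ n / d ^ i := ⟨_, hprod.symm⟩
    have h2 : d ^ (i + 1) ∣ n := by
      have := (Nat.dvd_div_iff_mul_dvd h1).mp hdvd
      rwa [← pow_succ] at this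
    refine ⟨h2, ?_⟩
    have he : (n / d ^ i) / d = ∏ x ∈ s.erase d, x := by
      rw [← hprod, Nat.mul_div_cancel_left _ hd0]
    rw [← he, Nat.div_div_eq_div_mul, ← pow_succ]
  by_cases h2 : d ^ (i + 1) ∣ n
  swap
  · have hB : B n k i d = ∅ :=
      Finset.eq_empty_iff_forall_notMem.mpr fun s hs => h2 (key s hs).1
    simp [hB, A, h2]
  have hq2 : 1 ≤ n / d ^ (i + 1) :=
    (Nat.one_le_div_iff (pow_pos hd0 _)).mpr (Nat.le_of_dvd hn0 h2)
  apply Finset.card_bij (fun s _ => s.erase d)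
  · intro s hs
    obtain ⟨-, hprod⟩ := key s hs
    rw [mem_B] at hs
    obtain ⟨-, hsF, hds⟩ := hs
    rw [mem_F hq1] at hsF
    rw [mem_A]
    refine ⟨h2, ?_, notMem_erase _ _⟩
    rw [mem_F hq2]
    refine ⟨?_, fun x hx => hsF.2.1 x (mem_of_mem_erase hx), hprod⟩
    rw [Finset.card_erase_of_mem hds, hsF.1, Nat.sub_sub]
  · intro s1 h1' s2 h2' he
    rw [mem_B] at h1' h2'
    rw [← Finset.insert_erase h1'.2.2, ← Finset.insert_erase h2'.2.2, he]
  · intro t ht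
    rw [mem_A] at ht
    obtain ⟨-, htF, hdt⟩ := ht
    rw [mem_F hq2] at htF
    refine ⟨insert d t, ?_, Finset.erase_insert hdt⟩
    rw [mem_B]
    refine ⟨h1, ?_, mem_insert_self d t⟩
    rw [mem_F hq1]
    refine ⟨?_, ?_, ?_⟩
    · rw [Finset.card_insert_of_notMem hdt, htF.1]; omega
    · intro x hx
      rcases mem_insert.mp hx with rfl | hx
      · exact hd
      · exact htF.2.1 x hx
    · rw [Finset.prod_insert hdt, htF.2.2]
      obtain ⟨m, rfl⟩ := h2
      rw [Nat.mul_div_cancel_left _ (pow_pos hd0 _),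
        show d ^ (i + 1) * m = d ^ i * (d * m) by rw [pow_succ]; ring,
        Nat.mul_div_cancel_left _ (pow_pos hd0 _)]

lemma a1_eq {n k : ℕ} (hn : 2 ≤ n) (hk : 1 ≤ k) :
    ∑ d ∈ Icc 2 n, (A n k 1 d).card = k * (F k n).card := by
  have hn0 : 0 < n := by omega
  have hn1 : 1 ≤ n := by omega
  rw [← Finset.card_sigma]
  have hT : k * (F k n).card = ((F k n).sigma (fun t => t)).card := by
    rw [Finset.card_sigma,
      Finset.sum_congr rfl (fun t ht => ((mem_F hn1).mp ht).1),
      Finset.sum_const, smul_eq_mul, mul_comm]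
  rw [hT]
  apply Finset.card_bij (fun p _ => (⟨insert p.1 p.2, p.1⟩ : Σ _ : Finset ℕ, ℕ))
  · rintro ⟨d, s⟩ hp
    dsimp only
    rw [Finset.mem_sigma] at hp
    dsimp only at hp
    obtain ⟨hd, hs⟩ := hp
    rw [mem_Icc] at hd
    rw [mem_A, pow_one] at hs
    obtain ⟨hdn, hsF, hds⟩ := hs
    have hd0 : 0 < d := by omega
    have hq : 1 ≤ n / d := (Nat.one_le_div_iff hd0).mpr (Nat.le_of_dvd hn0 hdn)
    rw [mem_F hq] at hsF
    rw [Finset.mem_sigma]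
    constructor
    · rw [mem_F hn1]
      refine ⟨?_, ?_, ?_⟩
      · rw [Finset.card_insert_of_notMem hds, hsF.1]; omega
      · intro x hx
        rcases mem_insert.mp hx with rfl | hx
        · exact hd.1
        · exact hsF.2.1 x hx
      · rw [Finset.prod_insert hds, hsF.2.2, Nat.mul_div_cancel' hdn]
    · exact mem_insert_self _ _
  · rintro ⟨d1, s1⟩ h1 ⟨d2, s2⟩ h2 he
    rw [Finset.mem_sigma, mem_A] at h1 h2
    dsimp only at h1 h2 he
    simp only [Sigma.mk.inj_iff, heq_eq_eq] at he
    obtain ⟨ht, hd⟩ := he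
    subst hd
    have : s1 = s2 := by
      rw [← Finset.erase_insert h1.2.2.2, ← Finset.erase_insert h2.2.2.2, ht]
    subst this
    rfl
  · rintro ⟨t, d⟩ hp
    rw [Finset.mem_sigma] at hp
    obtain ⟨htF, hdt⟩ := hp
    rw [mem_F hn1] at htF
    have hd2 : 2 ≤ d := htF.2.1 d hdt
    have hd0 : 0 < d := by omega
    have hdn : d ∣ n := htF.2.2 ▸ dvd_prod_of_mem _ hdt
    have hq : 1 ≤ n / d := (Nat.one_le_div_iff hd0).mpr (Nat.le_of_dvd hn0 hdn)
    refine ⟨⟨d, t.erase d⟩, ?_, ?_⟩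
    · rw [Finset.mem_sigma]
      refine ⟨mem_Icc.mpr ⟨hd2, Nat.le_of_dvd hn0 hdn⟩, ?_⟩
      rw [mem_A, pow_one]
      refine ⟨hdn, ?_, notMem_erase _ _⟩
      rw [mem_F hq]
      refine ⟨?_, fun x hx => htF.2.1 x (mem_of_mem_erase hx), ?_⟩
      · rw [Finset.card_erase_of_mem hdt, htF.1]
      · have hprod : d * ∏ x ∈ t.erase d, x = n :=
          (Finset.mul_prod_erase t (fun x => x) hdt).trans htF.2.2
        rw [← hprod, Nat.mul_div_cancel_left _ hd0]
    · simp only [Sigma.mk.inj_iff, heq_eq_eq, and_true]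
      exact Finset.insert_erase hdt

lemma tele (a : ℕ → ℤ) :
    ∀ k, 1 ≤ k →
      ∑ i ∈ Icc 1 k, (-1 : ℤ) ^ (i + 1) * (a i + if i < k then a (i + 1) else 0) = a 1 := by
  intro k
  induction k with
  | zero => intro h; exact absurd h (by omega)
  | succ k ih =>
    intro _
    by_cases hk : 1 ≤ k
    · rw [show Icc 1 (k + 1) = insert (k + 1) (Icc 1 k) by
        ext x; simp only [mem_insert, mem_Icc]; omega]
      rw [Finset.sum_insert (by simp)]
      have hsplit : ∀ i ∈ Icc 1 k,
          (-1 : ℤ) ^ (i + 1) * (a i + if i < k + 1 then a (i + 1) else 0)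
          = (-1 : ℤ) ^ (i + 1) * (a i + if i < k then a (i + 1) else 0)
            + (if i = k then (-1 : ℤ) ^ (i + 1) * a (i + 1) else 0) := by
        intro i hi
        rw [mem_Icc] at hi
        by_cases h : i = k
        · subst h
          rw [if_neg (lt_irrefl i), if_pos (Nat.lt_succ_self i), if_pos rfl]
          ring
        · have : i < k := by omega
          simp only [if_pos this, if_pos (by omega : i < k + 1), if_neg h, add_zero]
      rw [Finset.sum_congr rfl hsplit, Finset.sum_add_distrib, ih hk,
        Finset.sum_ite_eq' (Icc 1 k) k (fun i => (-1 : ℤ) ^ (i + 1) * a (i + 1)),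
        if_pos (mem_Icc.mpr ⟨hk, le_refl k⟩), if_neg (lt_irrefl (k + 1)), add_zero,
        show (-1 : ℤ) ^ (k + 1 + 1) = -(-1 : ℤ) ^ (k + 1) by rw [pow_succ]; ring]
      ring
    · have : k = 0 := by omega
      subst this
      simp

end NDFaux

open NDFaux

/-- **Recursion for `g_k(n)`:** for `n ≥ 2` and `k ≥ 1`,
`k · g_k(n) = ∑ (-1)^{i+1} g_{k-i}(n / d^i)`, summed over pairs `(d, i)` with
`d ≥ 2`, `1 ≤ i ≤ k` and `d^i ∣ n` (terms with `i > k` vanish). -/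
theorem numDistinctFactorizations_recursion (n k : ℕ) (hn : 2 ≤ n) (hk : 1 ≤ k) :
    (k : ℤ) * numDistinctFactorizations k n =
      ∑ d ∈ Finset.Icc 2 n, ∑ i ∈ Finset.Icc 1 k,
        if d ^ i ∣ n then
          (-1 : ℤ) ^ (i + 1) * numDistinctFactorizations (k - i) (n / d ^ i)
        else 0 := by
  have hn0 : 0 < n := by omega
  rw [Finset.sum_comm]
  have step1 : ∀ i ∈ Icc 1 k,
      (∑ d ∈ Icc 2 n, if d ^ i ∣ n then
        (-1 : ℤ) ^ (i + 1) * numDistinctFactorizations (k - i) (n / d ^ i) else 0)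
      = (-1 : ℤ) ^ (i + 1) *
          ((∑ d ∈ Icc 2 n, ((A n k i d).card : ℤ))
            + if i < k then ∑ d ∈ Icc 2 n, ((A n k (i + 1) d).card : ℤ) else 0) := by
    intro i hi
    rw [mem_Icc] at hi
    have hAB : ∀ d ∈ Icc 2 n,
        (if d ^ i ∣ n then
          (-1 : ℤ) ^ (i + 1) * numDistinctFactorizations (k - i) (n / d ^ i) else 0)
        = (-1 : ℤ) ^ (i + 1) * (((A n k i d).card : ℤ) + ((B n k i d).card : ℤ)) := by
      intro d hd
      rw [mem_Icc] at hd
      by_cases h : d ^ i ∣ n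
      · have hd0 : 0 < d := by omega
        have hq : 1 ≤ n / d ^ i :=
          (Nat.one_le_div_iff (pow_pos hd0 i)).mpr (Nat.le_of_dvd hn0 h)
        rw [if_pos h, g_eq hq, card_F_split (k := k) h]
        push_cast
        ring
      · rw [if_neg h]
        simp [A, B, h]
    rw [Finset.sum_congr rfl hAB, ← Finset.mul_sum, Finset.sum_add_distrib]
    congr 1
    congr 1
    by_cases hik : i < k
    · rw [if_pos hik]
      refine Finset.sum_congr rfl fun d hd => ?_
      rw [mem_Icc] at hd
      exact_mod_cast congrArg (fun m : ℕ => (m : ℤ)) (B_card hn hd.1 hik)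
    · rw [if_neg hik]
      have hik' : i = k := by omega
      subst hik'
      refine Finset.sum_eq_zero fun d _ => ?_
      exact_mod_cast B_card_top (n := n) (d := d)
  rw [Finset.sum_congr rfl step1,
    tele (fun i => ∑ d ∈ Icc 2 n, ((A n k i d).card : ℤ)) k hk,
    g_eq (by omega : 1 ≤ n)]
  have := a1_eq hn hk
  exact_mod_cast this.symm
end

section
/- For n ≥ 2, g(n) = Σ_{i=0}^{⌊(Ω-1)/2⌋} G_{Ω-2i}(n), where g(n) is the total number of factorizations of n into pairwise distinct parts ≥ 2, G_k(n) is the number of factorizations into exactly k distinct parts ≥ 1, and Ω = Ω(n). -/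
open Finset

/-- `g n`: total number of factorizations of `n` into pairwise distinct parts `≥ 2`. -/
noncomputable def numAllDistinctFactorizations (n : ℕ) : ℕ :=
  Nat.card {s : Finset ℕ // (∀ x ∈ s, 2 ≤ x) ∧ ∏ x ∈ s, x = n}

/-- `G k n`: number of factorizations of `n` into exactly `k` pairwise distinct
parts `≥ 1`. -/
noncomputable def numDistinctFactorizationsOne (k n : ℕ) : ℕ :=
  Nat.card {s : Finset ℕ // s.card = k ∧ (∀ x ∈ s, 1 ≤ x) ∧ ∏ x ∈ s, x = n}

namespace DistinctFactorAux

/-- `Nat.card` of a subtype of finsets as a filter card. -/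
lemma subtype_card (n : ℕ) (P : Finset ℕ → Prop) [DecidablePred P]
    (hP : ∀ s, P s → s ⊆ n.divisors) :
    Nat.card {s : Finset ℕ // P s} = ((n.divisors.powerset).filter P).card := by
  rw [← Nat.card_eq_finsetCard]
  refine Nat.card_congr (Equiv.subtypeEquivRight fun s => ?_)
  simp only [Finset.mem_filter, Finset.mem_powerset]
  exact ⟨fun h => ⟨hP s h, h⟩, fun h => h.2⟩

lemma subset_divisors {n : ℕ} (hn : n ≠ 0) (s : Finset ℕ)
    (h1 : ∀ x ∈ s, 1 ≤ x) (hp : ∏ x ∈ s, x = n) : s ⊆ n.divisors := by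
  intro x hx
  rw [Nat.mem_divisors]
  exact ⟨hp ▸ Finset.dvd_prod_of_mem _ hx, hn⟩

def A (k n : ℕ) : Finset (Finset ℕ) :=
  (n.divisors.powerset).filter (fun s => s.card = k ∧ (∀ x ∈ s, 1 ≤ x) ∧ ∏ x ∈ s, x = n)

def B (k n : ℕ) : Finset (Finset ℕ) :=
  (n.divisors.powerset).filter (fun s => s.card = k ∧ (∀ x ∈ s, 2 ≤ x) ∧ ∏ x ∈ s, x = n)

def T (n : ℕ) : Finset (Finset ℕ) :=
  (n.divisors.powerset).filter (fun s => (∀ x ∈ s, 2 ≤ x) ∧ ∏ x ∈ s, x = n)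

lemma G_eq (k n : ℕ) (hn : n ≠ 0) :
    numDistinctFactorizationsOne k n = (A k n).card := by
  rw [numDistinctFactorizationsOne, A]
  refine subtype_card n _ ?_
  rintro s ⟨hc, h1, hp⟩
  exact subset_divisors hn s h1 hp

lemma g_eq (n : ℕ) (hn : n ≠ 0) :
    numAllDistinctFactorizations n = (T n).card := by
  rw [numAllDistinctFactorizations, T]
  refine subtype_card n _ ?_
  rintro s ⟨h2, hp⟩
  exact subset_divisors hn s (fun x hx => le_trans one_le_two (h2 x hx)) hp

lemma prod_pos (s : Finset ℕ) (h2 : ∀ x ∈ s, 2 ≤ x) : 0 < ∏ x ∈ s, x :=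
  Finset.prod_pos (fun x hx => lt_of_lt_of_le two_pos (h2 x hx))

/-- each element contributes at least one prime factor. -/
lemma card_le_omega : ∀ (s : Finset ℕ), (∀ x ∈ s, 2 ≤ x) →
    s.card ≤ (∏ x ∈ s, x).primeFactorsList.length := by
  intro s
  induction s using Finset.induction_on with
  | empty => intro _; simp
  | @insert a t ha ih =>
    intro h2
    have h2t : ∀ x ∈ t, 2 ≤ x := fun x hx => h2 x (Finset.mem_insert_of_mem hx)
    have hih := ih h2t
    have h2a : 2 ≤ a := h2 a (Finset.mem_insert_self a t)
    have hta : (0:ℕ) < ∏ x ∈ t, x := prod_pos t h2t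
    rw [Finset.prod_insert ha, Finset.card_insert_of_notMem ha]
    have hlen : (a * ∏ x ∈ t, x).primeFactorsList.length =
        a.primeFactorsList.length + (∏ x ∈ t, x).primeFactorsList.length := by
      have := (Nat.perm_primeFactorsList_mul (a := a) (b := ∏ x ∈ t, x)
        (by omega) (by omega)).length_eq
      simpa using this
    have hanil : a.primeFactorsList ≠ [] := by
      rw [Ne, Nat.primeFactorsList_eq_nil]; omega
    have ha1 : 1 ≤ a.primeFactorsList.length :=
      Nat.one_le_iff_ne_zero.mpr (fun h => hanil (List.length_eq_zero_iff.mp h))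
    omega

lemma B_zero (n : ℕ) (hn : 2 ≤ n) : (B 0 n).card = 0 := by
  rw [Finset.card_eq_zero]
  ext s
  simp only [B, Finset.mem_filter, Finset.notMem_empty, iff_false, not_and]
  intro _ hc
  rw [Finset.card_eq_zero] at hc
  subst hc
  simp only [Finset.prod_empty, not_and]
  omega

/-- fiberwise decomposition of all factorizations by cardinality -/
lemma T_card (n : ℕ) (hn : 2 ≤ n) :
    (T n).card = ∑ k ∈ Finset.range (n.primeFactorsList.length + 1), (B k n).card := by
  rw [Finset.card_eq_sum_card_fiberwise
    (f := fun s => s.card) (t := Finset.range (n.primeFactorsList.length + 1))]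
  · refine Finset.sum_congr rfl fun k _ => ?_
    congr 1
    ext s
    simp only [T, B, Finset.mem_filter]
    tauto
  · intro s hs
    simp only [T, Finset.mem_coe, Finset.mem_filter] at hs
    rw [Finset.mem_coe, Finset.mem_range, Nat.lt_succ_iff]
    have := card_le_omega s hs.2.1
    rwa [hs.2.2] at this

/-- Splitting `G k n` by whether `1` is a part. -/
lemma A_card (k n : ℕ) (hk : 1 ≤ k) (hn : 2 ≤ n) :
    (A k n).card = (B k n).card + (B (k - 1) n).card := by
  have hsplit := Finset.card_filter_add_card_filter_not
    (s := A k n) (p := fun s => (1:ℕ) ∈ s)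
  have h1 : (A k n).filter (fun s => (1:ℕ) ∉ s) = B k n := by
    ext s
    simp only [A, B, Finset.mem_filter]
    constructor
    · rintro ⟨⟨hsub, hc, h1s, hp⟩, hnot⟩
      refine ⟨hsub, hc, fun x hx => ?_, hp⟩
      have := h1s x hx
      have : x ≠ 1 := fun h => hnot (h ▸ hx)
      omega
    · rintro ⟨hsub, hc, h2s, hp⟩
      exact ⟨⟨hsub, hc, fun x hx => le_trans one_le_two (h2s x hx), hp⟩,
        fun h => by have := h2s 1 h; omega⟩
  have h2 : ((A k n).filter (fun s => (1:ℕ) ∈ s)).card = (B (k - 1) n).card := by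
    refine Finset.card_bij (fun s _ => s.erase 1) ?_ ?_ ?_
    · intro s hs
      simp only [A, Finset.mem_filter, Finset.mem_powerset] at hs
      obtain ⟨⟨hsub, hc, h1s, hp⟩, h1mem⟩ := hs
      simp only [B, Finset.mem_filter, Finset.mem_powerset]
      refine ⟨Finset.Subset.trans (Finset.erase_subset 1 s) hsub, ?_, ?_, ?_⟩
      · rw [Finset.card_erase_of_mem h1mem, hc]
      · intro x hx
        have hxs := Finset.mem_of_mem_erase hx
        have hx1 := Finset.ne_of_mem_erase hx
        have := h1s x hxs
        omega
      · have h := Finset.mul_prod_erase s id h1mem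
        simp only [id_eq, one_mul, hp] at h
        exact h
    · intro s hs t ht hst
      simp only [Finset.mem_filter] at hs ht
      have hst' : s.erase 1 = t.erase 1 := hst
      have : insert 1 (s.erase 1) = insert 1 (t.erase 1) := by rw [hst']
      rwa [Finset.insert_erase hs.2, Finset.insert_erase ht.2] at this
    · intro t ht
      simp only [B, Finset.mem_filter, Finset.mem_powerset] at ht
      obtain ⟨hsub, hc, h2t, hp⟩ := ht
      have h1t : (1:ℕ) ∉ t := fun h => by have := h2t 1 h; omega
      refine ⟨insert 1 t, ?_, ?_⟩
      · rw [Finset.mem_filter]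
        constructor
        · simp only [A, Finset.mem_filter, Finset.mem_powerset]
          refine ⟨?_, ?_, ?_, ?_⟩
          · intro x hx
            rcases Finset.mem_insert.mp hx with h | h
            · subst h
              rw [Nat.mem_divisors]
              exact ⟨one_dvd n, by omega⟩
            · exact hsub h
          · rw [Finset.card_insert_of_notMem h1t, hc]; omega
          · intro x hx
            rcases Finset.mem_insert.mp hx with h | h
            · omega
            · exact le_trans one_le_two (h2t x h)
          · rw [Finset.prod_insert h1t, one_mul, hp]
        · exact Finset.mem_insert_self 1 t
      · show (insert 1 t).erase 1 = t
        rw [Finset.erase_insert h1t]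
  have h1' : ((A k n).filter (fun s => (1:ℕ) ∉ s)).card = (B k n).card := by rw [h1]
  omega

/-- pairing up a sum -/
lemma sum_pair (a : ℕ → ℕ) (m : ℕ) :
    ∑ i ∈ Finset.range m, (a (2 * i) + a (2 * i + 1)) = ∑ j ∈ Finset.range (2 * m), a j := by
  induction m with
  | zero => simp
  | succ m ih =>
    rw [Finset.sum_range_succ, ih]
    have h : 2 * (m + 1) = (2 * m + 1) + 1 := by ring
    rw [h, Finset.sum_range_succ, Finset.sum_range_succ]
    ring

end DistinctFactorAux

/-- **`g(n) = ∑_{i=0}^{⌊(Ω-1)/2⌋} G_{Ω-2i}(n)`** for `n ≥ 2`, where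
`Ω = Ω(n)` is the number of prime factors of `n` counted with multiplicity. -/
theorem numAllDistinctFactorizations_eq (n : ℕ) (hn : 2 ≤ n) :
    numAllDistinctFactorizations n =
      ∑ i ∈ Finset.range ((n.primeFactorsList.length - 1) / 2 + 1),
        numDistinctFactorizationsOne (n.primeFactorsList.length - 2 * i) n := by
  classical
  open DistinctFactorAux in
  set Ω := n.primeFactorsList.length with hΩdef
  have hn0 : n ≠ 0 := by omega
  have hΩ1 : 1 ≤ Ω := by
    have : n.primeFactorsList ≠ [] := by
      rw [Ne, Nat.primeFactorsList_eq_nil]; omega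
    have := List.length_pos_iff.mpr this
    omega
  set m := (Ω - 1) / 2 with hm
  -- rewrite RHS
  have hRHS : ∑ i ∈ Finset.range (m + 1), numDistinctFactorizationsOne (Ω - 2 * i) n =
      ∑ i ∈ Finset.range (m + 1),
        ((DistinctFactorAux.B (Ω - 2 * i) n).card + (DistinctFactorAux.B (Ω - (2 * i + 1)) n).card) := by
    refine Finset.sum_congr rfl fun i hi => ?_
    rw [Finset.mem_range] at hi
    have hib : 2 * i ≤ Ω - 1 := by
      have : i ≤ m := by omega
      omega
    have hk : 1 ≤ Ω - 2 * i := by omega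
    rw [DistinctFactorAux.G_eq _ _ hn0, DistinctFactorAux.A_card _ _ hk hn]
    congr 2
    try omega
  rw [hRHS, DistinctFactorAux.sum_pair (fun j => (DistinctFactorAux.B (Ω - j) n).card) (m + 1)]
  rw [DistinctFactorAux.g_eq n hn0, DistinctFactorAux.T_card n hn]
  have hreflect : ∑ k ∈ Finset.range (Ω + 1), (DistinctFactorAux.B k n).card =
      ∑ j ∈ Finset.range (Ω + 1), (DistinctFactorAux.B (Ω - j) n).card := by
    rw [← Finset.sum_range_reflect (fun k => (DistinctFactorAux.B k n).card) (Ω + 1)]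
    refine Finset.sum_congr rfl fun j hj => ?_
    rw [Finset.mem_range] at hj
    congr 1
    try omega
  rw [hreflect]
  rcases Nat.even_or_odd Ω with he | ho
  · -- Ω even : 2*(m+1) = Ω, extra term is B 0
    obtain ⟨c, hc⟩ := he
    have h2m : 2 * (m + 1) = Ω := by omega
    rw [h2m, Finset.sum_range_succ]
    have : Ω - Ω = 0 := by omega
    rw [this, DistinctFactorAux.B_zero n hn, add_zero]
  · obtain ⟨c, hc⟩ := ho
    have h2m : 2 * (m + 1) = Ω + 1 := by omega
    rw [h2m]
end

section
/- For n ≥ 1 and 1 ≤ k ≤ n, Σ_{i=1}^k S(n,i) = Σ_{α ∈ P_k} h(β(α))·β_1(α)^n, where S(n,i) is the Stirling number of the second kind, P_k is the set of partitions of k, β_1(α) is the number of parts of α equal to 1, and h(β) = (∏_i i^{β_i} β_i!)^{-1}. -/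
open Finset

/-- The Stirling number of the second kind `S(n,k)`: the number of partitions of
an `n`-element set into exactly `k` blocks. -/
noncomputable def stirlingSnd (n k : ℕ) : ℕ :=
  Nat.card {P : Finpartition (Finset.univ : Finset (Fin n)) // P.parts.card = k}

section aux



/-- weight denominator -/
def gq (m : Multiset ℕ) : ℚ :=
  ∏ i ∈ m.toFinset, (i : ℚ) ^ (m.count i) * (Nat.factorial (m.count i) : ℚ)

lemma gq_cons (i : ℕ) (m : Multiset ℕ) :
    gq (i ::ₘ m) = (i : ℚ) * (m.count i + 1) * gq m := by
  classical
  unfold gq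
  rw [Multiset.toFinset_cons]
  by_cases hi : i ∈ m.toFinset
  · rw [Finset.insert_eq_self.2 hi]
    rw [← Finset.mul_prod_erase _ _ hi, ← Finset.mul_prod_erase _ _ hi]
    have hcount : ∀ j ∈ m.toFinset.erase i,
        (i : ℚ)⁻¹ = 0 ∨ (i ::ₘ m).count j = m.count j := by
      intro j hj
      exact Or.inr (Multiset.count_cons_of_ne (Finset.ne_of_mem_erase hj) m)
    rw [Finset.prod_congr rfl (fun j hj => by
      rw [Multiset.count_cons_of_ne (Finset.ne_of_mem_erase hj) m])]
    rw [Multiset.count_cons_self]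
    push_cast [Nat.factorial_succ]
    ring
  · rw [Finset.prod_insert hi]
    have hc0 : m.count i = 0 := by
      simpa [Multiset.count_eq_zero] using fun h => hi (Multiset.mem_toFinset.2 h)
    rw [Finset.prod_congr rfl (fun j hj => by
      rw [Multiset.count_cons_of_ne (by rintro rfl; exact hi hj) m])]
    rw [Multiset.count_cons_self, hc0]
    norm_num

lemma gq_ne_zero {m : Multiset ℕ} (hm : ∀ i ∈ m, 0 < i) : gq m ≠ 0 := by
  unfold gq
  refine Finset.prod_ne_zero_iff.2 fun i hi => ?_
  have hipos : 0 < i := hm i (Multiset.mem_toFinset.1 hi)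
  positivity

/-- RHS sum -/
def Rq (n k : ℕ) : ℚ :=
  ∑ α ∈ (Finset.univ : Finset (Nat.Partition k)),
    (gq α.parts)⁻¹ * (α.parts.count 1 : ℚ) ^ n

lemma sum_partition_erase (k i : ℕ) (hi : 0 < i) (f : Multiset ℕ → ℚ) :
    ∑ α ∈ (Finset.univ : Finset (Nat.Partition (k + i))).filter (fun α => i ∈ α.parts),
      f (α.parts.erase i)
    = ∑ α ∈ (Finset.univ : Finset (Nat.Partition k)), f α.parts := by
  refine Finset.sum_bij' (fun α hα => ⟨α.parts.erase i, ?_, ?_⟩)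
    (fun α _ => (⟨i ::ₘ α.parts, ?_, ?_⟩ : Nat.Partition (k + i))) ?_ ?_ ?_ ?_ ?_
  · exact fun h => α.parts_pos (Multiset.mem_of_mem_erase h)
  · have hmem : i ∈ α.parts := (Finset.mem_filter.1 hα).2
    have h1 : (i ::ₘ α.parts.erase i).sum = α.parts.sum := by
      rw [Multiset.cons_erase hmem]
    rw [Multiset.sum_cons, α.parts_sum] at h1
    omega
  · intro j hj
    rcases Multiset.mem_cons.1 hj with rfl | h
    · exact hi
    · exact α.parts_pos h
  · rw [Multiset.sum_cons, α.parts_sum]; omega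
  · intro α hα; exact Finset.mem_univ _
  · intro α hα
    simp only [Finset.mem_filter, Finset.mem_univ, true_and]
    exact Multiset.mem_cons_self _ _
  · intro α hα
    apply Nat.Partition.ext
    exact Multiset.cons_erase (Finset.mem_filter.1 hα).2
  · intro α hα
    apply Nat.Partition.ext
    exact Multiset.erase_cons_head _ _
  · intro α hα; rfl

lemma sum_partition_erase' (k i : ℕ) (hi : 0 < i) (hik : i ≤ k) (f : Multiset ℕ → ℚ) :
    ∑ α ∈ (Finset.univ : Finset (Nat.Partition k)).filter (fun α => i ∈ α.parts),
      f (α.parts.erase i)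
    = ∑ α ∈ (Finset.univ : Finset (Nat.Partition (k - i))), f α.parts := by
  obtain ⟨d, rfl⟩ := Nat.exists_eq_add_of_le hik
  have h1 : i + d = d + i := by omega
  have h2 : i + d - i = d := by omega
  rw [h2]
  rw [h1]
  exact sum_partition_erase d i hi f

lemma per_alpha (k : ℕ) (α : Nat.Partition k) (i : ℕ) (hi : i ∈ α.parts.toFinset) :
    ((α.parts.count i : ℚ) * i) * (gq α.parts)⁻¹ = (gq (α.parts.erase i))⁻¹ := by
  have hmem : i ∈ α.parts := Multiset.mem_toFinset.1 hi
  have hm : i ::ₘ α.parts.erase i = α.parts := Multiset.cons_erase hmem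
  have hgq := gq_cons i (α.parts.erase i)
  rw [hm] at hgq
  have hcount : ((α.parts.erase i).count i : ℚ) + 1 = (α.parts.count i : ℚ) := by
    have h1 : 1 ≤ α.parts.count i := Multiset.one_le_count_iff_mem.2 hmem
    have h2 : (α.parts.erase i).count i = α.parts.count i - 1 :=
      Multiset.count_erase_self i α.parts
    rw [h2]
    push_cast [Nat.cast_sub h1]
    ring
  rw [hcount] at hgq
  have hipos : 0 < i := α.parts_pos hmem
  have hgne : gq (α.parts.erase i) ≠ 0 :=
    gq_ne_zero (fun j hj => α.parts_pos (Multiset.mem_of_mem_erase hj))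
  have hcpos : (0:ℚ) < (α.parts.count i : ℚ) := by
    exact_mod_cast Multiset.one_le_count_iff_mem.2 hmem
  have hine : (i:ℚ) ≠ 0 := by exact_mod_cast hipos.ne'
  have hcne : (α.parts.count i : ℚ) ≠ 0 := hcpos.ne'
  rw [hgq, mul_inv, mul_inv]
  have : (α.parts.count i : ℚ) * i * ((i:ℚ)⁻¹ * (α.parts.count i : ℚ)⁻¹ * (gq (α.parts.erase i))⁻¹)
      = ((α.parts.count i : ℚ) * (α.parts.count i : ℚ)⁻¹) * ((i:ℚ) * (i:ℚ)⁻¹) * (gq (α.parts.erase i))⁻¹ := by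
    ring
  rw [this, mul_inv_cancel₀ hcne, mul_inv_cancel₀ hine, one_mul, one_mul]

lemma Rq_zero_left : ∀ k, Rq 0 k = 1 := by
  intro k
  induction k using Nat.strong_induction_on with
  | _ k ih =>
  rcases Nat.eq_zero_or_pos k with rfl | hk
  · rw [Rq]
    rw [Finset.sum_eq_single (default : Nat.Partition 0)]
    · simp [gq, default]
    · intro b _ hb; exact absurd (Subsingleton.elim b default) hb
    · intro h; exact absurd (Finset.mem_univ _) h
  have key : (k : ℚ) * Rq 0 k = ∑ j ∈ Finset.range k, Rq 0 j := by
    rw [Rq, Finset.mul_sum]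
    have step1 : ∀ α : Nat.Partition k,
        (k:ℚ) * ((gq α.parts)⁻¹ * (α.parts.count 1 : ℚ) ^ 0)
        = ∑ i ∈ α.parts.toFinset, (gq (α.parts.erase i))⁻¹ := by
      intro α
      rw [pow_zero, mul_one]
      have hsum : (k : ℚ) = ∑ i ∈ α.parts.toFinset, ((α.parts.count i : ℚ) * i) := by
        have h := Finset.sum_multiset_map_count α.parts (fun x : ℕ => (x:ℚ))
        simp only [nsmul_eq_mul] at h
        rw [← h]
        have h3 : α.parts.sum = k := α.parts_sum
        calc (k:ℚ) = ((α.parts.sum : ℕ) : ℚ) := by rw [h3]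
          _ = (α.parts.map (fun x : ℕ => (x:ℚ))).sum := by push_cast; rfl
      rw [hsum, Finset.sum_mul]
      exact Finset.sum_congr rfl (fun i hi => per_alpha k α i hi)
    rw [Finset.sum_congr rfl (fun α _ => step1 α)]
    -- extend inner sums to Icc 1 k
    have step2 : ∀ α : Nat.Partition k,
        ∑ i ∈ α.parts.toFinset, (gq (α.parts.erase i))⁻¹
        = ∑ i ∈ Finset.Icc 1 k,
            (if i ∈ α.parts then (gq (α.parts.erase i))⁻¹ else 0) := by
      intro α
      rw [Finset.sum_ite, Finset.sum_const_zero, add_zero]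
      apply Finset.sum_congr _ (fun _ _ => rfl)
      ext i
      simp only [Multiset.mem_toFinset, Finset.mem_filter, Finset.mem_Icc]
      constructor
      · intro h
        refine ⟨⟨α.parts_pos h, ?_⟩, h⟩
        have := Multiset.cons_erase h
        calc i ≤ (i ::ₘ α.parts.erase i).sum := by
                rw [Multiset.sum_cons]; omega
          _ = k := by rw [this, α.parts_sum]
      · exact fun h => h.2
    rw [Finset.sum_congr rfl (fun α _ => step2 α)]
    rw [Finset.sum_comm]
    have step3 : ∀ i ∈ Finset.Icc 1 k,
        (∑ α ∈ (Finset.univ : Finset (Nat.Partition k)),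
          (if i ∈ α.parts then (gq (α.parts.erase i))⁻¹ else 0)) = Rq 0 (k - i) := by
      intro i hi
      rw [Finset.mem_Icc] at hi
      rw [← Finset.sum_filter]
      rw [sum_partition_erase' k i hi.1 hi.2 (fun m => (gq m)⁻¹)]
      rw [Rq]
      exact Finset.sum_congr rfl (fun α _ => by rw [pow_zero, mul_one])
    rw [Finset.sum_congr rfl step3]
    -- reindex i ↦ k - i
    refine Finset.sum_nbij' (fun i => k - i) (fun j => k - j) ?_ ?_ ?_ ?_ ?_
    · intro i hi; rw [Finset.mem_Icc] at hi; rw [Finset.mem_range]; omega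
    · intro j hj; rw [Finset.mem_range] at hj; rw [Finset.mem_Icc]; omega
    · intro i hi; rw [Finset.mem_Icc] at hi; omega
    · intro j hj; rw [Finset.mem_range] at hj; omega
    · intro i hi; rfl
  have hsum : ∑ j ∈ Finset.range k, Rq 0 j = k := by
    rw [Finset.sum_congr rfl (fun j hj => ih j (Finset.mem_range.1 hj))]
    simp
  rw [hsum] at key
  have hk' : (k : ℚ) ≠ 0 := by exact_mod_cast hk.ne'
  have : (k : ℚ) * Rq 0 k = (k:ℚ) * 1 := by rw [key, mul_one]
  exact mul_left_cancel₀ hk' this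

lemma Rq_succ (n k : ℕ) :
    Rq (n + 1) (k + 1) = ∑ j ∈ Finset.range (n + 1), (n.choose j : ℚ) * Rq j k := by
  have step1 : Rq (n+1) (k+1)
      = ∑ α ∈ (Finset.univ : Finset (Nat.Partition (k+1))),
          (if 1 ∈ α.parts then
            (gq (α.parts.erase 1))⁻¹ * (((α.parts.erase 1).count 1 : ℚ) + 1) ^ n else 0) := by
    rw [Rq]
    refine Finset.sum_congr rfl (fun α _ => ?_)
    by_cases h1 : 1 ∈ α.parts
    · rw [if_pos h1]
      have hm : (1 : ℕ) ::ₘ α.parts.erase 1 = α.parts := Multiset.cons_erase h1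
      have hgq := gq_cons 1 (α.parts.erase 1)
      rw [hm] at hgq
      have hcount : ((α.parts.erase 1).count 1 : ℚ) + 1 = (α.parts.count 1 : ℚ) := by
        have hc1 : 1 ≤ α.parts.count 1 := Multiset.one_le_count_iff_mem.2 h1
        have h2 : (α.parts.erase 1).count 1 = α.parts.count 1 - 1 :=
          Multiset.count_erase_self 1 α.parts
        rw [h2, Nat.cast_sub hc1]
        push_cast; ring
      have hgne : gq (α.parts.erase 1) ≠ 0 :=
        gq_ne_zero (fun j hj => α.parts_pos (Multiset.mem_of_mem_erase hj))
      have hcne : (α.parts.count 1 : ℚ) ≠ 0 := by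
        have : (0:ℚ) < (α.parts.count 1 : ℚ) := by
          exact_mod_cast Multiset.one_le_count_iff_mem.2 h1
        exact this.ne'
      rw [hgq, Nat.cast_one, one_mul, hcount, mul_inv, pow_succ]
      field_simp
    · rw [if_neg h1]
      have hc0 : α.parts.count 1 = 0 := Multiset.count_eq_zero.2 h1
      rw [hc0]
      push_cast
      rw [zero_pow (Nat.succ_ne_zero n)]
      ring
  rw [step1, ← Finset.sum_filter]
  rw [sum_partition_erase k 1 Nat.one_pos
    (fun m => (gq m)⁻¹ * ((m.count 1 : ℚ) + 1) ^ n)]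
  have step2 : ∀ α : Nat.Partition k,
      (gq α.parts)⁻¹ * ((α.parts.count 1 : ℚ) + 1) ^ n
      = ∑ j ∈ Finset.range (n+1),
          (n.choose j : ℚ) * ((gq α.parts)⁻¹ * (α.parts.count 1 : ℚ) ^ j) := by
    intro α
    rw [add_pow]
    rw [Finset.mul_sum]
    refine Finset.sum_congr rfl (fun j hj => ?_)
    rw [one_pow]
    ring
  rw [Finset.sum_congr rfl (fun α _ => step2 α)]
  rw [Finset.sum_comm]
  refine Finset.sum_congr rfl (fun j hj => ?_)
  rw [Rq, Finset.mul_sum]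


variable {α β : Type*} [DecidableEq α] [DecidableEq β]

/-- Transport a finpartition along a map injective on `s`. -/
def fpMap {s : Finset α} (φ : α → β) (hφ : Set.InjOn φ ↑s) (P : Finpartition s) :
    Finpartition (s.image φ) where
  parts := P.parts.image (Finset.image φ)
  supIndep := by
    rw [Finset.supIndep_iff_pairwiseDisjoint]
    rintro a ha b hb hab
    simp only [Finset.coe_image, Set.mem_image, Finset.mem_coe] at ha hb
    obtain ⟨p, hp, rfl⟩ := ha
    obtain ⟨q, hq, rfl⟩ := hb
    have hpq : p ≠ q := fun h => hab (by rw [h])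
    have hdisj : Disjoint p q := P.disjoint hp hq hpq
    simp only [Function.onFun, Finset.disjoint_left, id]
    rintro x hx hx'
    simp only [Finset.mem_image] at hx hx'
    obtain ⟨u, hu, rfl⟩ := hx
    obtain ⟨v, hv, hvu⟩ := hx'
    have hus : u ∈ (s : Set α) := P.le hp hu
    have hvs : v ∈ (s : Set α) := P.le hq hv
    have : v = u := hφ hvs hus hvu
    subst this
    exact (Finset.disjoint_left.1 hdisj hu) hv
  sup_parts := by
    ext b
    simp only [Finset.mem_sup, Finset.mem_image, id]
    constructor
    · rintro ⟨t, ht, hb⟩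
      obtain ⟨p, hp, rfl⟩ := ht
      rw [Finset.mem_image] at hb
      obtain ⟨a, ha, rfl⟩ := hb
      exact ⟨a, P.le hp ha, rfl⟩
    · rintro ⟨a, ha, rfl⟩
      obtain ⟨p, hp, hap⟩ := P.exists_mem ha
      exact ⟨p.image φ, ⟨p, hp, rfl⟩, Finset.mem_image_of_mem φ hap⟩
  bot_notMem := by
    simp only [Finset.bot_eq_empty, Finset.mem_image]
    rintro ⟨p, hp, hpe⟩
    rw [Finset.image_eq_empty] at hpe
    have : p = ⊥ := by rw [Finset.bot_eq_empty]; exact hpe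
    exact P.bot_notMem (this ▸ hp)

@[simp] lemma fpMap_parts {s : Finset α} (φ : α → β) (hφ : Set.InjOn φ ↑s)
    (P : Finpartition s) : (fpMap φ hφ P).parts = P.parts.image (Finset.image φ) := rfl

lemma fpMap_parts_card {s : Finset α} (φ : α → β) (hφ : Set.InjOn φ ↑s)
    (P : Finpartition s) : (fpMap φ hφ P).parts.card = P.parts.card := by
  rw [fpMap_parts]
  apply Finset.card_image_of_injOn
  intro p hp q hq hpq
  have hps : ↑p ⊆ (s : Set α) := P.le hp
  have hqs : ↑q ⊆ (s : Set α) := P.le hq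
  ext x
  constructor
  · intro hx
    have : φ x ∈ q.image φ := hpq ▸ Finset.mem_image_of_mem φ hx
    rw [Finset.mem_image] at this
    obtain ⟨y, hy, hyx⟩ := this
    have : y = x := hφ (hqs hy) (hps hx) hyx
    exact this ▸ hy
  · intro hx
    have : φ x ∈ p.image φ := hpq ▸ Finset.mem_image_of_mem φ hx
    rw [Finset.mem_image] at this
    obtain ⟨y, hy, hyx⟩ := this
    have : y = x := hφ (hps hy) (hqs hx) hyx
    exact this ▸ hy

/-- number of finpartitions of `s` into at most `k` parts -/
def Fcnt (s : Finset α) (k : ℕ) : ℕ :=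
  #((Finset.univ : Finset (Finpartition s)).filter fun P => P.parts.card ≤ k)

lemma Fcnt_eq_of_card_eq {s : Finset α} {t : Finset β} (h : s.card = t.card) (k : ℕ) :
    Fcnt s k = Fcnt t k := by
  rcases Finset.eq_empty_or_nonempty s with rfl | hs
  · have ht : t = ∅ := by rw [← Finset.card_eq_zero, ← h, Finset.card_empty]
    subst ht
    have e1 : ∀ P : Finpartition (∅ : Finset α), P.parts = ∅ := fun P =>
      Finpartition.parts_eq_empty_iff.2 rfl
    have e2 : ∀ P : Finpartition (∅ : Finset β), P.parts = ∅ := fun P =>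
      Finpartition.parts_eq_empty_iff.2 rfl
    unfold Fcnt
    rw [Finset.filter_true_of_mem (fun P _ => by rw [e1 P]; simp),
      Finset.filter_true_of_mem (fun P _ => by rw [e2 P]; simp)]
    rw [Finset.card_univ, Finset.card_univ]
    have c1 : Fintype.card (Finpartition (∅ : Finset α)) = 1 :=
      Fintype.card_eq_one_iff.2 ⟨(Finpartition.empty (Finset α)).copy Finset.bot_eq_empty, fun Q => by
        apply Finpartition.ext; rw [e1 Q]; exact (e1 _).symm⟩
    have c2 : Fintype.card (Finpartition (∅ : Finset β)) = 1 :=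
      Fintype.card_eq_one_iff.2 ⟨(Finpartition.empty (Finset β)).copy Finset.bot_eq_empty, fun Q => by
        apply Finpartition.ext; rw [e2 Q]; exact (e2 _).symm⟩
    rw [c1, c2]
  · have ht : t.Nonempty := by
      rw [← Finset.card_pos, ← h, Finset.card_pos]; exact hs
    obtain ⟨b₀, hb₀⟩ := ht
    obtain ⟨a₀, ha₀⟩ := hs
    have e : {x // x ∈ s} ≃ {x // x ∈ t} := Finset.equivOfCardEq h
    set φ : α → β := fun a => if h : a ∈ s then (e ⟨a, h⟩ : β) else b₀ with hφdef
    set ψ : β → α := fun b => if h : b ∈ t then (e.symm ⟨b, h⟩ : α) else a₀ with hψdef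
    have hψφ : ∀ a ∈ s, ψ (φ a) = a := by
      intro a ha
      simp only [hφdef, hψdef, dif_pos ha, Finset.coe_mem, dif_pos, Subtype.coe_eta,
        Equiv.symm_apply_apply]
    have hφψ : ∀ b ∈ t, φ (ψ b) = b := by
      intro b hb
      simp only [hφdef, hψdef, dif_pos hb, Finset.coe_mem, dif_pos, Subtype.coe_eta,
        Equiv.apply_symm_apply]
    have hφs : ∀ a ∈ s, φ a ∈ t := fun a ha => by
      simp only [hφdef, dif_pos ha]; exact Finset.coe_mem _
    have hψt : ∀ b ∈ t, ψ b ∈ s := fun b hb => by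
      simp only [hψdef, dif_pos hb]; exact Finset.coe_mem _
    have hinjφ : Set.InjOn φ ↑s := fun a ha a' ha' hh => by
      rw [← hψφ a ha, ← hψφ a' ha', hh]
    have hinjψ : Set.InjOn ψ ↑t := fun b hb b' hb' hh => by
      rw [← hφψ b hb, ← hφψ b' hb', hh]
    have himg : s.image φ = t := by
      apply Finset.Subset.antisymm
      · intro b hb
        rw [Finset.mem_image] at hb
        obtain ⟨a, ha, rfl⟩ := hb
        exact hφs a ha
      · intro b hb
        rw [Finset.mem_image]
        exact ⟨ψ b, hψt b hb, hφψ b hb⟩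
    have himg' : t.image ψ = s := by
      apply Finset.Subset.antisymm
      · intro a ha
        rw [Finset.mem_image] at ha
        obtain ⟨b, hb, rfl⟩ := ha
        exact hψt b hb
      · intro a ha
        rw [Finset.mem_image]
        exact ⟨φ a, hφs a ha, hψφ a ha⟩
    unfold Fcnt
    apply Finset.card_bij' (fun P _ => (fpMap φ hinjφ P).copy himg)
      (fun Q _ => (fpMap ψ hinjψ Q).copy himg')
    · intro P hP
      rw [Finset.mem_filter] at hP ⊢
      refine ⟨Finset.mem_univ _, ?_⟩
      rw [Finpartition.copy_parts, fpMap_parts_card]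
      exact hP.2
    · intro Q hQ
      rw [Finset.mem_filter] at hQ ⊢
      refine ⟨Finset.mem_univ _, ?_⟩
      rw [Finpartition.copy_parts, fpMap_parts_card]
      exact hQ.2
    · intro P hP
      apply Finpartition.ext
      simp only [Finpartition.copy_parts, fpMap_parts]
      rw [Finset.image_image]
      have hpp : ∀ p ∈ P.parts, (Finset.image ψ ∘ Finset.image φ) p = p := by
        intro p hp
        simp only [Function.comp_apply, Finset.image_image]
        calc p.image (ψ ∘ φ) = p.image id :=
              Finset.image_congr (fun x hx => hψφ x (P.le hp hx))
          _ = p := Finset.image_id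
      calc P.parts.image _ = P.parts.image id := Finset.image_congr hpp
        _ = P.parts := Finset.image_id
    · intro Q hQ
      apply Finpartition.ext
      simp only [Finpartition.copy_parts, fpMap_parts]
      rw [Finset.image_image]
      have hpp : ∀ p ∈ Q.parts, (Finset.image φ ∘ Finset.image ψ) p = p := by
        intro p hp
        simp only [Function.comp_apply, Finset.image_image]
        calc p.image (φ ∘ ψ) = p.image id :=
              Finset.image_congr (fun x hx => hφψ x (Q.le hp hx))
          _ = p := Finset.image_id
      calc Q.parts.image _ = Q.parts.image id := Finset.image_congr hpp
        _ = Q.parts := Finset.image_id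

lemma sup_erase_part {s : Finset α} (P : Finpartition s) {B : Finset α} (hB : B ∈ P.parts) :
    (P.parts.erase B).sup id = s \ B := by
  apply le_antisymm
  · apply Finset.sup_le
    intro p hp
    rw [id]
    show p ⊆ s \ B
    rw [Finset.subset_sdiff]
    exact ⟨P.le (Finset.mem_of_mem_erase hp),
      P.disjoint (Finset.mem_of_mem_erase hp) hB (Finset.ne_of_mem_erase hp)⟩
  · intro x hx
    rw [Finset.mem_sdiff] at hx
    obtain ⟨p, hp, hxp⟩ := P.exists_mem hx.1
    have hne : p ≠ B := fun h => hx.2 (h ▸ hxp)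
    exact Finset.mem_sup.2 ⟨p, Finset.mem_erase.2 ⟨hne, hp⟩, hxp⟩

lemma Fcnt_univ_succ (n k : ℕ) :
    Fcnt (Finset.univ : Finset (Fin (n+1))) (k+1)
      = ∑ T ∈ ((Finset.univ : Finset (Fin (n+1))).erase 0).powerset, Fcnt T k := by
  unfold Fcnt
  rw [Finset.card_eq_sum_card_fiberwise
    (f := fun P : Finpartition (Finset.univ : Finset (Fin (n+1))) => Finset.univ \ P.part 0)
    (t := ((Finset.univ : Finset (Fin (n+1))).erase 0).powerset) ?hmap]
  case hmap =>
    intro P hP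
    rw [Finset.mem_coe, Finset.mem_powerset]
    intro x hx
    rw [Finset.mem_sdiff] at hx
    rw [Finset.mem_erase]
    refine ⟨fun h => hx.2 ?_, Finset.mem_univ _⟩
    rw [← h]
    exact P.mem_part (Finset.mem_univ _)
  refine Finset.sum_congr rfl (fun T hT => ?_)
  rw [Finset.mem_powerset] at hT
  have h0T : (0 : Fin (n+1)) ∉ T := fun h => (Finset.mem_erase.1 (hT h)).1 rfl
  have h0B : (0 : Fin (n+1)) ∈ Finset.univ \ T := by
    rw [Finset.mem_sdiff]; exact ⟨Finset.mem_univ _, h0T⟩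
  have hBne : Finset.univ \ T ≠ (⊥ : Finset (Fin (n+1))) := by
    rw [Finset.bot_eq_empty]
    exact Finset.ne_empty_of_mem h0B
  have hdisj : Disjoint T (Finset.univ \ T) := Finset.disjoint_sdiff
  have hsup : T ⊔ (Finset.univ \ T) = Finset.univ := by
    rw [Finset.sup_eq_union]
    exact Finset.union_sdiff_of_subset (Finset.subset_univ T)
  refine Finset.card_bij'
    (fun P hP =>
      (P.ofSubset (Finset.erase_subset _ _)
        (sup_erase_part P (P.part_mem.2 (Finset.mem_univ 0)))).copy
        ((Finset.mem_filter.1 hP).2))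
    (fun Q hQ => Q.extend hBne hdisj hsup) ?_ ?_ ?_ ?_
  · intro P hP
    rw [Finset.mem_filter]
    refine ⟨Finset.mem_univ _, ?_⟩
    rw [Finpartition.copy_parts, Finpartition.ofSubset_parts]
    have hmem := (Finset.mem_filter.1 (Finset.mem_filter.1 hP).1).2
    have hc := Finset.card_erase_of_mem (P.part_mem.2 (Finset.mem_univ (0 : Fin (n+1))))
    omega
  · intro Q hQ
    have hQ2 := (Finset.mem_filter.1 hQ).2
    rw [Finset.mem_filter]
    refine ⟨?_, ?_⟩
    · rw [Finset.mem_filter]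
      refine ⟨Finset.mem_univ _, ?_⟩
      rw [Finpartition.card_extend]
      exact Nat.add_le_add_right hQ2 1
    · have hBmem : Finset.univ \ T ∈ (Q.extend hBne hdisj hsup).parts := by
        rw [Finpartition.extend_parts]
        exact Finset.mem_insert_self _ _
      have := Finpartition.part_eq_of_mem _ hBmem h0B
      rw [this]
      exact Finset.sdiff_sdiff_eq_self (Finset.subset_univ T)
  · intro P hP
    have hfib := (Finset.mem_filter.1 hP).2
    apply Finpartition.ext
    rw [Finpartition.extend_parts, Finpartition.copy_parts, Finpartition.ofSubset_parts]
    have hBeq : Finset.univ \ T = P.part 0 := by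
      rw [← hfib]
      exact Finset.sdiff_sdiff_eq_self (Finset.subset_univ _)
    rw [hBeq]
    exact Finset.insert_erase (P.part_mem.2 (Finset.mem_univ _))
  · intro Q hQ
    apply Finpartition.ext
    rw [Finpartition.copy_parts, Finpartition.ofSubset_parts]
    have hpart : (Q.extend hBne hdisj hsup).part 0 = Finset.univ \ T := by
      apply Finpartition.part_eq_of_mem
      · rw [Finpartition.extend_parts]; exact Finset.mem_insert_self _ _
      · exact h0B
    rw [hpart]
    apply Finset.erase_insert
    intro hmem
    have hle : Finset.univ \ T ⊆ T := Q.le hmem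
    exact h0T (hle h0B)

lemma Fcnt_univ_succ' (n k : ℕ) :
    Fcnt (Finset.univ : Finset (Fin (n+1))) (k+1)
      = ∑ j ∈ Finset.range (n+1), (n.choose j) * Fcnt (Finset.univ : Finset (Fin j)) k := by
  rw [Fcnt_univ_succ]
  rw [Finset.sum_powerset]
  have hcard : #((Finset.univ : Finset (Fin (n+1))).erase 0) = n := by
    rw [Finset.card_erase_of_mem (Finset.mem_univ _), Finset.card_univ, Fintype.card_fin]
    omega
  rw [hcard]
  refine Finset.sum_congr rfl (fun j hj => ?_)
  have hinner : ∀ T ∈ Finset.powersetCard j ((Finset.univ : Finset (Fin (n+1))).erase 0),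
      Fcnt T k = Fcnt (Finset.univ : Finset (Fin j)) k := by
    intro T hT
    apply Fcnt_eq_of_card_eq
    rw [(Finset.mem_powersetCard.1 hT).2, Finset.card_univ, Fintype.card_fin]
  rw [Finset.sum_congr rfl hinner, Finset.sum_const, Finset.card_powersetCard, hcard,
    smul_eq_mul]

lemma Fcnt_zero_fin (k : ℕ) : Fcnt (Finset.univ : Finset (Fin 0)) k = 1 := by
  have huniv : (Finset.univ : Finset (Fin 0)) = ⊥ := by
    rw [Finset.bot_eq_empty, Finset.univ_eq_empty]
  have e1 : ∀ P : Finpartition (Finset.univ : Finset (Fin 0)), P.parts = ∅ := fun P =>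
    Finpartition.parts_eq_empty_iff.2 huniv
  unfold Fcnt
  rw [Finset.filter_true_of_mem (fun P _ => by rw [e1 P]; simp)]
  rw [Finset.card_univ]
  exact Fintype.card_eq_one_iff.2 ⟨(Finpartition.empty (Finset (Fin 0))).copy huniv.symm,
    fun Q => by apply Finpartition.ext; rw [e1 Q]; exact (e1 _).symm⟩

lemma Fcnt_fin_zero {n : ℕ} (hn : 0 < n) : Fcnt (Finset.univ : Finset (Fin n)) 0 = 0 := by
  unfold Fcnt
  rw [Finset.card_eq_zero, Finset.filter_eq_empty_iff]
  intro P _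
  rw [Nat.le_zero, Finset.card_eq_zero, Finpartition.parts_eq_empty_iff]
  intro h
  have : (Finset.univ : Finset (Fin n)).Nonempty := by
    haveI : NeZero n := ⟨hn.ne'⟩
    exact ⟨0, Finset.mem_univ 0⟩
  rw [h] at this
  exact Finset.not_nonempty_empty this

lemma Rq_fin_zero {n : ℕ} (hn : 0 < n) : Rq n 0 = 0 := by
  rw [Rq]
  refine Finset.sum_eq_zero (fun α _ => ?_)
  rw [Nat.Partition.partition_zero_parts α, Multiset.count_zero]
  rw [Nat.cast_zero, zero_pow hn.ne', mul_zero]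

lemma An_eq_Rq : ∀ n k : ℕ, (Fcnt (Finset.univ : Finset (Fin n)) k : ℚ) = Rq n k := by
  intro n
  induction n using Nat.strong_induction_on with
  | _ n ih =>
  match n with
  | 0 => intro k; rw [Fcnt_zero_fin, Rq_zero_left, Nat.cast_one]
  | Nat.succ m =>
    intro k
    match k with
    | 0 => rw [Fcnt_fin_zero (Nat.succ_pos m), Rq_fin_zero (Nat.succ_pos m), Nat.cast_zero]
    | Nat.succ l =>
      rw [Fcnt_univ_succ', Rq_succ]
      push_cast
      refine Finset.sum_congr rfl (fun j hj => ?_)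
      rw [ih j (Nat.lt_succ_of_le (Nat.le_of_lt_succ (Finset.mem_range.1 hj)))]

lemma stirlingSnd_eq_card (n i : ℕ) :
    stirlingSnd n i
      = #((Finset.univ : Finset (Finpartition (Finset.univ : Finset (Fin n)))).filter
          fun P => P.parts.card = i) := by
  rw [stirlingSnd, Nat.card_eq_fintype_card, Fintype.card_subtype]

lemma sum_stirling_eq_Fcnt {n k : ℕ} (hn : 1 ≤ n) :
    ∑ i ∈ Finset.Icc 1 k, stirlingSnd n i = Fcnt (Finset.univ : Finset (Fin n)) k := by
  unfold Fcnt
  rw [Finset.card_eq_sum_card_fiberwise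
    (f := fun P : Finpartition (Finset.univ : Finset (Fin n)) => P.parts.card)
    (t := Finset.Icc 1 k) ?hmap]
  case hmap =>
    intro P hP
    rw [Finset.mem_coe, Finset.mem_filter] at hP
    rw [Finset.mem_coe, Finset.mem_Icc]
    refine ⟨?_, hP.2⟩
    rw [Nat.one_le_iff_ne_zero]
    intro h0
    rw [Finset.card_eq_zero, Finpartition.parts_eq_empty_iff] at h0
    have : (Finset.univ : Finset (Fin n)).Nonempty := by
      haveI : NeZero n := ⟨Nat.one_le_iff_ne_zero.1 hn⟩
      exact ⟨0, Finset.mem_univ 0⟩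
    rw [h0] at this
    exact Finset.not_nonempty_empty this
  refine Finset.sum_congr rfl (fun i hi => ?_)
  rw [Finset.mem_Icc] at hi
  rw [stirlingSnd_eq_card, Finset.filter_filter]
  congr 1
  apply Finset.filter_congr
  intro P _
  constructor <;> intro h <;> omega

end aux

/-- **Partition-sum identity for partial sums of Stirling numbers:** for `n ≥ 1`
and `1 ≤ k ≤ n`, `∑_{i=1}^k S(n,i) = ∑_{α ∈ P_k} h(β(α)) · β₁(α)^n`, where
`β₁(α)` is the number of parts of `α` equal to `1` and
`h(β) = (∏ i, i^{β_i} β_i!)⁻¹`. -/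
theorem sum_stirling_eq_partition_sum (n k : ℕ) (hn : 1 ≤ n) (hk : 1 ≤ k) (hkn : k ≤ n) :
    ((∑ i ∈ Finset.Icc 1 k, stirlingSnd n i : ℕ) : ℚ) =
      ∑ α ∈ (Finset.univ : Finset (Nat.Partition k)),
        (∏ i ∈ α.parts.toFinset,
            (i : ℚ) ^ (α.parts.count i) * (Nat.factorial (α.parts.count i) : ℚ))⁻¹ *
          (α.parts.count 1 : ℚ) ^ n := by
  rw [sum_stirling_eq_Fcnt hn, An_eq_Rq]
  simp only [Rq, gq]
end

section
/- For n ≥ 1, the n-th Bell number satisfies B_n = Σ_{α ∈ P_n} h(β(α))·β_1(α)^n, where P_n is the set of partitions of n, β_1(α) is the number of parts equal to 1, and h(β) = (∏_i i^{β_i} β_i!)^{-1}. -/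
open Finset


/-- The `n`-th Bell number: the number of partitions of an `n`-element set. -/
noncomputable def bell (n : ℕ) : ℕ :=
  Nat.card (Finpartition (Finset.univ : Finset (Fin n)))

section BellProof

open Equiv Equiv.Perm Nat
open scoped Classical

set_option linter.unusedVariables false
set_option linter.unusedSectionVars false
set_option maxHeartbeats 1000000



section Helpers

/-- sigma decomposition of a subtype of a product -/
def prodSubtypeSigmaEquiv {A B : Type*} (R : A → B → Prop) :
    {p : A × B // R p.1 p.2} ≃ Σ a : A, {b : B // R a b} where
  toFun p := ⟨p.1.1, p.1.2, p.2⟩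
  invFun s := ⟨(s.1, s.2.1), s.2.2⟩
  left_inv p := rfl
  right_inv s := rfl

def prodSubtypeSigmaEquiv' {A B : Type*} (P : A → Prop) (R : A → B → Prop) :
    {p : A × B // P p.1 ∧ R p.1 p.2} ≃ Σ a : {a : A // P a}, {b : B // R a.1 b} where
  toFun p := ⟨⟨p.1.1, p.2.1⟩, p.1.2, p.2.2⟩
  invFun s := ⟨(s.1.1, s.2.1), s.1.2, s.2.2⟩
  left_inv p := rfl
  right_inv s := rfl

lemma nat_card_sigma {A : Type*} [Fintype A] (f : A → Type*) [∀ a, Fintype (f a)] :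
    Nat.card (Σ a, f a) = ∑ a, Nat.card (f a) := by
  simp [Nat.card_eq_fintype_card]

/-- the number of permutations fixing a given set pointwise -/
lemma card_perm_fixing {X : Type*} [Fintype X] [DecidableEq X] (S : Finset X) :
    Nat.card {σ : Equiv.Perm X // ∀ a ∈ S, σ a = a}
      = (Fintype.card X - S.card)! := by
  have e1 : Equiv.Perm {x : X // x ∉ S} ≃ {σ : Equiv.Perm X // ∀ a ∈ S, σ a = a} :=
    (Equiv.Perm.subtypeEquivSubtypePerm (fun x => x ∉ S)).trans
      (Equiv.subtypeEquivRight (fun σ => by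
        constructor
        · intro h a ha; exact h a (not_not_intro ha)
        · intro h a ha; exact h a (not_not.mp ha)))
  rw [← Nat.card_congr e1, Nat.card_eq_fintype_card, Fintype.card_perm]
  congr 1
  have : Fintype.card {x : X // x ∉ S} = Fintype.card X - Fintype.card {x : X // x ∈ S} :=
    Fintype.card_subtype_compl _
  rw [this, Fintype.card_coe]

end Helpers


/-- nodup lists of length i are equivalent to embeddings of Fin i -/
noncomputable def listEquivEmb (X : Type*) (i : ℕ) :
    {l : List X // l.Nodup ∧ l.length = i} ≃ (Fin i ↪ X) where
  toFun l := ⟨fun k => l.1.get (Fin.cast l.2.2.symm k), by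
    intro a b h
    have h2 := List.nodup_iff_injective_get.mp l.2.1 h
    simpa [Fin.ext_iff] using h2⟩
  invFun e := ⟨List.ofFn e, List.nodup_ofFn.2 e.injective, List.length_ofFn⟩
  left_inv l := by
    apply Subtype.ext
    apply List.ext_get (by simp [l.2.2])
    intro n h1 h2
    simp [List.get_ofFn]
    rfl
  right_inv e := by
    apply Function.Embedding.ext
    intro k
    simp [List.get_ofFn]

/-- pointed cycles of length i correspond to nodup lists of length i -/
noncomputable def pointedCycleEquiv (X : Type*) [Fintype X] [DecidableEq X] (i : ℕ) (hi : 2 ≤ i) :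
    {p : Equiv.Perm X × X // (p.1.IsCycle ∧ p.1.support.card = i) ∧ p.2 ∈ p.1.support} ≃
      {l : List X // l.Nodup ∧ l.length = i} where
  toFun p := ⟨p.1.1.toList p.1.2, Equiv.Perm.nodup_toList _ _, by
    rw [Equiv.Perm.length_toList, p.2.1.1.cycleOf_eq (mem_support.mp p.2.2), p.2.1.2]⟩
  invFun l := ⟨(l.1.formPerm, l.1.get ⟨0, by omega⟩), by
    have hnd := l.2.1
    have hlen : 2 ≤ l.1.length := by omega
    have hne : ∀ x : X, l.1 ≠ [x] := by
      intro x hx; rw [hx] at hlen; simp at hlen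
    have hsupp := List.support_formPerm_of_nodup l.1 hnd hne
    refine ⟨⟨List.isCycle_formPerm hnd hlen, ?_⟩, ?_⟩
    · rw [hsupp, List.toFinset_card_of_nodup hnd, l.2.2]
    · rw [hsupp, List.mem_toFinset]
      exact List.get_mem _ _⟩
  left_inv p := by
    apply Subtype.ext
    apply Prod.ext
    · simp only
      rw [Equiv.Perm.formPerm_toList, p.2.1.1.cycleOf_eq (mem_support.mp p.2.2)]
    · simp only
      exact Equiv.Perm.toList_getElem_zero _ _ p.2.2
  right_inv l := by
    apply Subtype.ext
    simp only
    have hlen : 2 ≤ l.1.length := by rw [l.2.2]; exact hi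
    have := Equiv.Perm.toList_formPerm_nontrivial l.1 hlen l.2.1
    convert this using 2

lemma card_cycles_mul (X : Type*) [Fintype X] [DecidableEq X] (i : ℕ) (hi : 2 ≤ i) :
    Nat.card {c : Equiv.Perm X // c.IsCycle ∧ c.support.card = i} * i
      = (Fintype.card X).descFactorial i := by
  have h1 : Nat.card {p : Equiv.Perm X × X // (p.1.IsCycle ∧ p.1.support.card = i)
      ∧ p.2 ∈ p.1.support} = (Fintype.card X).descFactorial i := by
    rw [Nat.card_congr ((pointedCycleEquiv X i hi).trans (listEquivEmb X i)),
      Nat.card_eq_fintype_card, Fintype.card_embedding_eq, Fintype.card_fin]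
  rw [← h1, Nat.card_congr (prodSubtypeSigmaEquiv' (fun c : Equiv.Perm X => c.IsCycle ∧ c.support.card = i) (fun c b => b ∈ c.support)), nat_card_sigma]
  have h2 : ∀ c : {c : Equiv.Perm X // c.IsCycle ∧ c.support.card = i},
      Nat.card {b : X // b ∈ (c.1).support} = i := by
    intro c
    rw [Nat.card_eq_fintype_card, Fintype.card_coe]
    exact c.2.2
  rw [Finset.sum_congr rfl (fun c _ => h2 c), Finset.sum_const, Finset.card_univ, smul_eq_mul,
    Nat.card_eq_fintype_card]

lemma M_cons (i : ℕ) (s : Multiset ℕ) :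
    ∏ j ∈ (i ::ₘ s).toFinset, ((i ::ₘ s).count j)!
      = (s.count i + 1) * ∏ j ∈ s.toFinset, (s.count j)! := by
  by_cases hmem : i ∈ s.toFinset
  · have hto : (i ::ₘ s).toFinset = s.toFinset := by
      rw [Multiset.toFinset_cons, Finset.insert_eq_self.mpr hmem]
    have h1 : ∀ j ∈ s.toFinset.erase i, ((i ::ₘ s).count j)! = (s.count j)! := by
      intro j hj
      rw [Multiset.count_cons_of_ne (Finset.ne_of_mem_erase hj)]
    rw [hto, ← Finset.prod_erase_mul _ _ hmem, ← Finset.prod_erase_mul _ _ hmem,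
      Finset.prod_congr rfl h1, Multiset.count_cons_self, Nat.factorial_succ]
    ring
  · rw [Multiset.toFinset_cons, Finset.prod_insert hmem]
    have h1 : ∀ j ∈ s.toFinset, ((i ::ₘ s).count j)! = (s.count j)! := by
      intro j hj
      rw [Multiset.count_cons_of_ne (by rintro rfl; exact hmem hj)]
    have h0 : s.count i = 0 := by
      rw [Multiset.count_eq_zero]
      intro h; exact hmem (Multiset.mem_toFinset.mpr h)
    rw [Finset.prod_congr rfl h1, Multiset.count_cons_self, h0]
    simp

lemma cycle_type_count (m : Multiset ℕ) : ∀ (X : Type) [Fintype X] [DecidableEq X],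
    (∀ j ∈ m, 2 ≤ j) → m.sum ≤ Fintype.card X →
    Nat.card {σ : Equiv.Perm X // σ.cycleType = m} *
      (m.prod * ∏ j ∈ m.toFinset, (m.count j)!) * (Fintype.card X - m.sum)! =
      (Fintype.card X)! := by
  induction m using Multiset.induction_on with
  | empty =>
    intro X _ _ _ _
    have h1 : Nat.card {σ : Equiv.Perm X // σ.cycleType = 0} = 1 := by
      rw [Nat.card_congr (Equiv.subtypeEquivRight
        (fun σ : Equiv.Perm X => Equiv.Perm.cycleType_eq_zero))]
      simp [Nat.card_eq_fintype_card]
    rw [h1]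
    simp
  | cons i s IH =>
    intro X _ _ hall hsum
    set n := Fintype.card X with hn
    have hi2 : 2 ≤ i := hall i (Multiset.mem_cons_self i s)
    have hs2 : ∀ j ∈ s, 2 ≤ j := fun j hj => hall j (Multiset.mem_cons_of_mem hj)
    have hsum' : i + s.sum ≤ n := by rwa [Multiset.sum_cons] at hsum
    have hin : i ≤ n := le_trans (Nat.le_add_right _ _) hsum'
    -- the type of decompositions
    set D := {p : Equiv.Perm X × Equiv.Perm X //
      (p.1.IsCycle ∧ p.1.support.card = i) ∧ (p.1.Disjoint p.2 ∧ p.2.cycleType = s)} with hD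
    -- Claim A : card D = card {σ // cycleType = i ::ₘ s} * (s.count i + 1)
    have claimA : Nat.card D
        = Nat.card {σ : Equiv.Perm X // σ.cycleType = i ::ₘ s} * (s.count i + 1) := by
      set g : D → {σ : Equiv.Perm X // σ.cycleType = i ::ₘ s} := fun d =>
        ⟨d.1.1 * d.1.2, by
          rw [d.2.2.1.cycleType_mul, d.2.1.1.cycleType, d.2.1.2, d.2.2.2]
          simp⟩ with hg
      have hDsig : Nat.card D = ∑ σ : {σ : Equiv.Perm X // σ.cycleType = i ::ₘ s},
          Nat.card {d : D // g d = σ} := by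
        rw [Nat.card_congr (Equiv.sigmaFiberEquiv g).symm, nat_card_sigma]
      have hfib : ∀ σ : {σ : Equiv.Perm X // σ.cycleType = i ::ₘ s},
          Nat.card {d : D // g d = σ} = s.count i + 1 := by
        intro σ
        have e : {d : D // g d = σ} ≃
            {c : σ.1.cycleFactorsFinset // (c : Equiv.Perm X).support.card = i} := by
          refine ⟨fun d => ⟨⟨d.1.1.1, ?_⟩, d.1.2.1.2⟩, fun c => ⟨⟨(c.1.1, σ.1 * c.1.1⁻¹), ?_⟩, ?_⟩, ?_, ?_⟩
          · -- d.1.1.1 ∈ cycleFactorsFinset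
            have hval : d.1.1.1 * d.1.1.2 = σ.1 := congrArg Subtype.val d.2
            refine Equiv.Perm.mem_cycleFactorsFinset_iff.mpr ⟨d.1.2.1.1, fun a ha => ?_⟩
            have hτ : d.1.1.2 a = a :=
              (d.1.2.2.1 a).resolve_left (Equiv.Perm.mem_support.mp ha)
            calc d.1.1.1 a = d.1.1.1 (d.1.1.2 a) := by rw [hτ]
              _ = (d.1.1.1 * d.1.1.2) a := rfl
              _ = σ.1 a := by rw [hval]
          · -- membership conditions for invFun
            have hdisj := (Equiv.Perm.disjoint_mul_inv_of_mem_cycleFactorsFinset c.1.2).symm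
            have hcyc := (Equiv.Perm.mem_cycleFactorsFinset_iff.mp c.1.2).1
            have hcomm : (σ.1 * c.1.1⁻¹) * c.1.1 = c.1.1 * (σ.1 * c.1.1⁻¹) :=
              (Equiv.Perm.disjoint_mul_inv_of_mem_cycleFactorsFinset c.1.2).commute
            have hval : c.1.1 * (σ.1 * c.1.1⁻¹) = σ.1 := by
              rw [← hcomm, inv_mul_cancel_right]
            refine ⟨⟨hcyc, c.2⟩, hdisj, ?_⟩
            · -- cycleType (σ * c⁻¹) = s
              have h1 := hdisj.cycleType_mul
              rw [hval, σ.2, hcyc.cycleType, c.2] at h1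
              simp only [Multiset.coe_singleton, Multiset.singleton_add] at h1
              exact ((Multiset.cons_inj_right i).mp h1).symm
          · -- g value
            apply Subtype.ext
            show c.1.1 * (σ.1 * c.1.1⁻¹) = σ.1
            have hcomm : (σ.1 * c.1.1⁻¹) * c.1.1 = c.1.1 * (σ.1 * c.1.1⁻¹) :=
              (Equiv.Perm.disjoint_mul_inv_of_mem_cycleFactorsFinset c.1.2).commute
            rw [← hcomm, inv_mul_cancel_right]
          · -- left inverse
            intro d
            apply Subtype.ext
            apply Subtype.ext
            apply Prod.ext
            · rfl
            · show σ.1 * d.1.1.1⁻¹ = d.1.1.2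
              have hval : d.1.1.1 * d.1.1.2 = σ.1 := congrArg Subtype.val d.2
              have hcomm : d.1.1.1 * d.1.1.2 = d.1.1.2 * d.1.1.1 := d.1.2.2.1.commute
              rw [← hval, hcomm, mul_inv_cancel_right]
          · -- right inverse
            intro c
            apply Subtype.ext
            apply Subtype.ext
            rfl
        rw [Nat.card_congr e, Nat.card_eq_fintype_card, ← Equiv.Perm.CycleType.count_def,
          σ.2, Multiset.count_cons_self]
      rw [hDsig, Finset.sum_congr rfl (fun σ _ => hfib σ), Finset.sum_const,
        Finset.card_univ, smul_eq_mul, Nat.card_eq_fintype_card]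
    -- Claim B : card D * Z = Ncyc * (n - i)!
    set Z := s.prod * (∏ j ∈ s.toFinset, (s.count j)!) * (n - i - s.sum)! with hZ
    have claimB : Nat.card D * Z
        = Nat.card {c : Equiv.Perm X // c.IsCycle ∧ c.support.card = i} * (n - i)! := by
      have eB := prodSubtypeSigmaEquiv' (fun c : Equiv.Perm X => c.IsCycle ∧ c.support.card = i)
        (fun c τ => c.Disjoint τ ∧ τ.cycleType = s)
      have hDB : Nat.card D = ∑ c : {c : Equiv.Perm X // c.IsCycle ∧ c.support.card = i},
          Nat.card {τ : Equiv.Perm X // c.1.Disjoint τ ∧ τ.cycleType = s} := by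
        rw [Nat.card_congr eB, nat_card_sigma]
      have hinner : ∀ c : {c : Equiv.Perm X // c.IsCycle ∧ c.support.card = i},
          Nat.card {τ : Equiv.Perm X // c.1.Disjoint τ ∧ τ.cycleType = s} * Z = (n - i)! := by
        intro c
        have hpred : ∀ τ : Equiv.Perm X, c.1.Disjoint τ →
            ∀ x : X, x ∉ c.1.support ↔ τ x ∉ c.1.support := by
          intro τ hd x
          by_cases hx : τ x = x
          · rw [hx]
          · have hxs : x ∈ τ.support := Equiv.Perm.mem_support.mpr hx
            have hxc : x ∉ c.1.support := by
              intro hc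
              exact hx ((hd x).resolve_left (Equiv.Perm.mem_support.mp hc))
            have hτx : τ x ∈ τ.support := Equiv.Perm.apply_mem_support.mpr hxs
            have hτxc : τ x ∉ c.1.support := by
              intro hc
              have := (hd (τ x)).resolve_left (Equiv.Perm.mem_support.mp hc)
              exact (Equiv.Perm.mem_support.mp hτx) this
            simp [hxc, hτxc]
        have einner : {τ : Equiv.Perm X // c.1.Disjoint τ ∧ τ.cycleType = s} ≃
            {g : Equiv.Perm {x : X // x ∉ c.1.support} // g.cycleType = s} := by
          refine ⟨fun τ => ⟨Equiv.Perm.subtypePerm τ.1 (fun x => (hpred τ.1 τ.2.1 x).symm), ?_⟩,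
            fun g => ⟨Equiv.Perm.ofSubtype g.1, ?_, ?_⟩, ?_, ?_⟩
          · -- cycleType subtypePerm = s
            have h2 : ∀ x : X, τ.1 x ≠ x → x ∉ c.1.support := by
              intro x hx hc
              exact hx ((τ.2.1 x).resolve_left (Equiv.Perm.mem_support.mp hc))
            rw [← Equiv.Perm.cycleType_ofSubtype,
              Equiv.Perm.ofSubtype_subtypePerm (fun x => (hpred τ.1 τ.2.1 x).symm) h2, τ.2.2]
          · -- disjoint
            intro a
            by_cases ha : a ∈ c.1.support
            · right
              exact Equiv.Perm.ofSubtype_apply_of_not_mem g.1 (by simpa using ha)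
            · left
              exact Equiv.Perm.notMem_support.mp ha
          · rw [Equiv.Perm.cycleType_ofSubtype]
            exact g.2
          · intro τ
            apply Subtype.ext
            have h2 : ∀ x : X, τ.1 x ≠ x → x ∉ c.1.support := by
              intro x hx hc
              exact hx ((τ.2.1 x).resolve_left (Equiv.Perm.mem_support.mp hc))
            exact Equiv.Perm.ofSubtype_subtypePerm (fun x => (hpred τ.1 τ.2.1 x).symm) h2
          · intro g
            apply Subtype.ext
            exact Equiv.Perm.subtypePerm_ofSubtype g.1
        have hcard : Fintype.card {x : X // x ∉ c.1.support} = n - i := by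
          have h1 : Fintype.card {x : X // x ∉ c.1.support}
              = Fintype.card X - Fintype.card {x : X // x ∈ c.1.support} :=
            Fintype.card_subtype_compl _
          rw [h1, Fintype.card_coe, c.2.2]
        have hIH := IH {x : X // x ∉ c.1.support} hs2 (by rw [hcard]; omega)
        rw [hcard] at hIH
        rw [Nat.card_congr einner, hZ]
        have harith : n - i - s.sum = n - i - s.sum := rfl
        calc Nat.card {g : Equiv.Perm {x : X // x ∉ c.1.support} // g.cycleType = s} *
              (s.prod * (∏ j ∈ s.toFinset, (s.count j)!) * (n - i - s.sum)!)
            = Nat.card {g : Equiv.Perm {x : X // x ∉ c.1.support} // g.cycleType = s} *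
              (s.prod * ∏ j ∈ s.toFinset, (s.count j)!) * (n - i - s.sum)! := by ring
          _ = (n - i)! := hIH
      rw [hDB, Finset.sum_mul, Finset.sum_congr rfl (fun c _ => hinner c), Finset.sum_const,
        Finset.card_univ, smul_eq_mul, Nat.card_eq_fintype_card]
    -- Claim C
    have claimC : Nat.card {c : Equiv.Perm X // c.IsCycle ∧ c.support.card = i} * i * (n - i)!
        = n ! := by
      rw [card_cycles_mul X i hi2]
      have h1 := Nat.descFactorial_mul_descFactorial (k := i) (m := n) (n := n) hin
      rw [Nat.descFactorial_self, Nat.descFactorial_self] at h1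
      rw [← h1]
      ring
    -- assemble
    rw [Multiset.sum_cons, Multiset.prod_cons, M_cons]
    have harg : n - (i + s.sum) = n - i - s.sum := by omega
    rw [harg]
    calc Nat.card {σ : Equiv.Perm X // σ.cycleType = i ::ₘ s} *
          (i * s.prod * ((s.count i + 1) * ∏ j ∈ s.toFinset, (s.count j)!)) * (n - i - s.sum)!
        = (Nat.card {σ : Equiv.Perm X // σ.cycleType = i ::ₘ s} * (s.count i + 1)) *
          (s.prod * (∏ j ∈ s.toFinset, (s.count j)!) * (n - i - s.sum)!) * i := by ring
      _ = Nat.card D * Z * i := by rw [claimA, hZ]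
      _ = Nat.card {c : Equiv.Perm X // c.IsCycle ∧ c.support.card = i} * (n - i)! * i := by
          rw [claimB]
      _ = Nat.card {c : Equiv.Perm X // c.IsCycle ∧ c.support.card = i} * i * (n - i)! := by
          ring
      _ = n ! := claimC


lemma finpartition_ext_part {α : Type*} [DecidableEq α] {s : Finset α}
    (P Q : Finpartition s) (h : ∀ a ∈ s, P.part a = Q.part a) : P = Q := by
  apply Finpartition.ext
  apply Finset.Subset.antisymm
  · intro p hp
    obtain ⟨x, hx, hxp⟩ := P.part_surjOn hp
    rw [← hxp, h x hx]
    exact Q.part_mem.mpr hx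
  · intro p hp
    obtain ⟨x, hx, hxp⟩ := Q.part_surjOn hp
    rw [← hxp, ← h x hx]
    exact P.part_mem.mpr hx

variable {X : Type} [Fintype X] [DecidableEq X]

/-- the partition into fibers of a function -/
noncomputable def fiberPartition (f : X → X) : Finpartition (univ : Finset X) :=
  Finpartition.ofSetoid (Setoid.ker f)

lemma mem_part_fiberPartition (f : X → X) (a b : X) :
    b ∈ (fiberPartition f).part a ↔ f a = f b := by
  rw [fiberPartition, Finpartition.mem_part_ofSetoid_iff_rel, Setoid.ker_def]

noncomputable def fiberEquivP (P : Finpartition (univ : Finset X)) :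
    {t : {p : Equiv.Perm X × (X → X) // ∀ x, p.1 (p.2 x) = p.2 x} //
        fiberPartition t.1.2 = P} ≃
      Σ j : (↥P.parts ↪ X), {σ : Equiv.Perm X // ∀ b : ↥P.parts, σ (j b) = j b} := by
  have hrep : ∀ b : ↥P.parts, (P.nonempty_of_mem_parts b.2).choose ∈ b.1 :=
    fun b => (P.nonempty_of_mem_parts b.2).choose_spec
  set rep : ↥P.parts → X := fun b => (P.nonempty_of_mem_parts b.2).choose with hrepdef
  have key : ∀ (f : X → X), fiberPartition f = P → ∀ a b : X, (b ∈ P.part a ↔ f a = f b) := by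
    intro f hf a b
    rw [← hf, mem_part_fiberPartition]
  refine ⟨fun t => ⟨⟨fun b => t.1.1.2 (rep b), ?_⟩, ⟨t.1.1.1, fun b => t.1.2 (rep b)⟩⟩,
    fun js => ⟨⟨⟨js.2.1, fun x => js.1 ⟨P.part x, P.part_mem.mpr (mem_univ x)⟩⟩,
      fun x => js.2.2 _⟩, ?_⟩, ?_, ?_⟩
  · -- injectivity of j
    intro b₁ b₂ hb
    simp only at hb
    have h1 : rep b₂ ∈ P.part (rep b₁) := (key _ t.2 _ _).mpr hb
    have h2 : P.part (rep b₁) = b₁.1 := P.part_eq_of_mem b₁.2 (hrep b₁)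
    rw [h2] at h1
    exact Subtype.ext (P.eq_of_mem_parts b₁.2 b₂.2 h1 (hrep b₂))
  · -- the fiber partition of the constructed f is P
    set f : X → X := fun x => js.1 ⟨P.part x, P.part_mem.mpr (mem_univ x)⟩ with hfdef
    apply finpartition_ext_part
    intro a _
    ext b
    rw [mem_part_fiberPartition]
    have : f a = f b ↔ P.part a = P.part b := by
      constructor
      · intro h
        have := js.1.injective h
        exact congrArg Subtype.val (this : (⟨P.part a, _⟩ : ↥P.parts) = ⟨P.part b, _⟩)
      · intro h
        show js.1 ⟨P.part a, _⟩ = js.1 ⟨P.part b, _⟩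
        congr 1
        exact Subtype.ext h
    rw [this, P.mem_part_iff_part_eq_part (mem_univ b) (mem_univ a)]
    exact eq_comm
  · -- left inverse
    intro t
    apply Subtype.ext
    apply Subtype.ext
    apply Prod.ext
    · rfl
    · funext x
      show t.1.1.2 (rep ⟨P.part x, _⟩) = t.1.1.2 x
      have h1 : rep ⟨P.part x, P.part_mem.mpr (mem_univ x)⟩ ∈ P.part x :=
        hrep ⟨P.part x, P.part_mem.mpr (mem_univ x)⟩
      exact ((key _ t.2 x _).mp h1).symm
  · -- right inverse
    intro js
    have hfst : ∀ b : ↥P.parts,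
        js.1 ⟨P.part (rep b), P.part_mem.mpr (mem_univ _)⟩ = js.1 b := by
      intro b
      congr 1
      exact Subtype.ext (P.part_eq_of_mem b.2 (hrep b))
    apply Sigma.ext
    · exact Function.Embedding.ext fun b => hfst b
    · refine (Subtype.heq_iff_coe_eq ?_).mpr rfl
      intro σ
      constructor
      · intro h b
        have hb : σ (js.1 ⟨P.part (rep b), P.part_mem.mpr (mem_univ _)⟩)
            = js.1 ⟨P.part (rep b), P.part_mem.mpr (mem_univ _)⟩ := h b
        rwa [hfst b] at hb
      · intro h b
        show σ (js.1 ⟨P.part (rep b), P.part_mem.mpr (mem_univ _)⟩)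
            = js.1 ⟨P.part (rep b), P.part_mem.mpr (mem_univ _)⟩
        rw [hfst b]
        exact h b

lemma card_fiberP (P : Finpartition (univ : Finset X)) :
    Nat.card {t : {p : Equiv.Perm X × (X → X) // ∀ x, p.1 (p.2 x) = p.2 x} //
        fiberPartition t.1.2 = P} = (Fintype.card X)! := by
  rw [Nat.card_congr (fiberEquivP P), nat_card_sigma]
  have hinner : ∀ j : ↥P.parts ↪ X,
      Nat.card {σ : Equiv.Perm X // ∀ b : ↥P.parts, σ (j b) = j b}
        = (Fintype.card X - P.parts.card)! := by
    intro j
    have e : {σ : Equiv.Perm X // ∀ b : ↥P.parts, σ (j b) = j b} ≃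
        {σ : Equiv.Perm X // ∀ a ∈ Finset.image j Finset.univ, σ a = a} := by
      apply Equiv.subtypeEquivRight
      intro σ
      constructor
      · rintro h a ha
        obtain ⟨b, _, rfl⟩ := Finset.mem_image.mp ha
        exact h b
      · intro h b
        exact h (j b) (Finset.mem_image_of_mem j (mem_univ b))
    rw [Nat.card_congr e, card_perm_fixing,
      Finset.card_image_of_injective _ j.injective, Finset.card_univ, Fintype.card_coe]
  rw [Finset.sum_congr rfl (fun j _ => hinner j), Finset.sum_const, Finset.card_univ,
    smul_eq_mul, Fintype.card_embedding_eq, Fintype.card_coe]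
  have hk : P.parts.card ≤ Fintype.card X := by
    have := P.card_parts_le_card
    rwa [Finset.card_univ] at this
  have h1 := Nat.descFactorial_mul_descFactorial (k := P.parts.card)
    (m := Fintype.card X) (n := Fintype.card X) hk
  rw [Nat.descFactorial_self, Nat.descFactorial_self] at h1
  rw [← h1]
  ring

lemma claim1 :
    (Fintype.card X)! * Nat.card (Finpartition (univ : Finset X))
      = ∑ σ : Equiv.Perm X, (Fintype.card X - σ.support.card) ^ (Fintype.card X) := by
  set T := {p : Equiv.Perm X × (X → X) // ∀ x, p.1 (p.2 x) = p.2 x} with hT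
  have hb : Nat.card T = (Fintype.card X)! * Nat.card (Finpartition (univ : Finset X)) := by
    rw [Nat.card_congr (Equiv.sigmaFiberEquiv (fun t : T => fiberPartition t.1.2)).symm,
      nat_card_sigma, Finset.sum_congr rfl (fun P _ => card_fiberP P), Finset.sum_const,
      Finset.card_univ, smul_eq_mul, Nat.card_eq_fintype_card, mul_comm]
  have ha : Nat.card T = ∑ σ : Equiv.Perm X,
      (Fintype.card X - σ.support.card) ^ (Fintype.card X) := by
    rw [Nat.card_congr (prodSubtypeSigmaEquiv (fun (σ : Equiv.Perm X) (f : X → X) =>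
      ∀ x, σ (f x) = f x)), nat_card_sigma]
    apply Finset.sum_congr rfl
    intro σ _
    have e : {f : X → X // ∀ x, σ (f x) = f x} ≃ (X → {y : X // σ y = y}) := by
      refine ⟨fun f x => ⟨f.1 x, f.2 x⟩, fun g => ⟨fun x => (g x).1, fun x => (g x).2⟩, ?_, ?_⟩
      · intro f; apply Subtype.ext; rfl
      · intro g; funext x; apply Subtype.ext; rfl
    rw [Nat.card_congr e, Nat.card_fun, Nat.card_eq_fintype_card, Nat.card_eq_fintype_card]
    congr 2
    · rw [Fintype.card_subtype]
      have h1 : (univ.filter fun y => σ y = y) = univ \ σ.support := by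
        ext y
        simp [Equiv.Perm.mem_support]
      rw [h1, Finset.card_sdiff_of_subset (Finset.subset_univ _), Finset.card_univ]
  rw [← hb, ha]


section PartitionLemmas

variable {n : ℕ}

lemma parts_decomp (α : Nat.Partition n) :
    α.parts = α.parts.filter (fun j => 2 ≤ j)
      + Multiset.replicate (n - (α.parts.filter (fun j => 2 ≤ j)).sum) 1 := by
  have hrep : α.parts.filter (fun j => ¬ 2 ≤ j)
      = Multiset.replicate (Multiset.card (α.parts.filter (fun j => ¬ 2 ≤ j))) 1 := by
    rw [Multiset.eq_replicate_card]
    intro b hb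
    have h1 := Multiset.mem_filter.mp hb
    have h2 := α.parts_pos h1.1
    omega
  have hdec := Multiset.filter_add_not (fun j => 2 ≤ j) α.parts
  have hsum : α.parts.sum = n := α.parts_sum
  have hsum2 : (α.parts.filter (fun j => 2 ≤ j)).sum
      + Multiset.card (α.parts.filter (fun j => ¬ 2 ≤ j)) = n := by
    conv_rhs => rw [← hsum]
    conv_rhs => rw [← hdec]
    rw [Multiset.sum_add]
    congr 1
    rw [hrep, Multiset.sum_replicate, smul_eq_mul, mul_one, Multiset.card_replicate]
  have hcard : Multiset.card (α.parts.filter (fun j => ¬ 2 ≤ j))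
      = n - (α.parts.filter (fun j => 2 ≤ j)).sum := by omega
  conv_lhs => rw [← hdec]
  rw [hrep, hcard]

lemma count_one_parts (α : Nat.Partition n) :
    α.parts.count 1 = n - (α.parts.filter (fun j => 2 ≤ j)).sum := by
  conv_lhs => rw [parts_decomp α]
  rw [Multiset.count_add, Multiset.count_replicate_self]
  have h0 : Multiset.count 1 (α.parts.filter (fun j => 2 ≤ j)) = 0 := by
    rw [Multiset.count_eq_zero]
    intro h
    have := (Multiset.mem_filter.mp h).2
    omega
  omega

lemma filter_sum_le (α : Nat.Partition n) :
    (α.parts.filter (fun j => 2 ≤ j)).sum ≤ n := by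
  obtain ⟨u, hu⟩ := Multiset.le_iff_exists_add.mp (Multiset.filter_le (fun j => 2 ≤ j) α.parts)
  have h := congrArg Multiset.sum hu
  rw [Multiset.sum_add, α.parts_sum] at h
  omega

end PartitionLemmas

section Bridge

variable {X : Type} [Fintype X] [DecidableEq X]

lemma partition_eq_iff (σ : Equiv.Perm X) (α : Nat.Partition (Fintype.card X)) :
    σ.partition = α ↔ σ.cycleType = α.parts.filter (fun j => 2 ≤ j) := by
  constructor
  · rintro rfl
    exact Equiv.Perm.filter_parts_partition_eq_cycleType.symm
  · intro h
    apply Nat.Partition.ext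
    rw [Equiv.Perm.parts_partition, ← Equiv.Perm.sum_cycleType, h]
    exact (parts_decomp α).symm

lemma count_one_partition (σ : Equiv.Perm X) :
    σ.partition.parts.count 1 = Fintype.card X - σ.support.card := by
  rw [Equiv.Perm.parts_partition, Multiset.count_add, Multiset.count_replicate_self]
  have h0 : Multiset.count 1 σ.cycleType = 0 := by
    rw [Multiset.count_eq_zero]
    intro h
    have := Equiv.Perm.two_le_of_mem_cycleType h
    omega
  omega

lemma K_decomp (α : Nat.Partition (Fintype.card X)) :
    ∏ j ∈ α.parts.toFinset, (j ^ α.parts.count j * (α.parts.count j)!)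
      = ((α.parts.filter (fun j => 2 ≤ j)).prod *
          ∏ j ∈ (α.parts.filter (fun j => 2 ≤ j)).toFinset,
            ((α.parts.filter (fun j => 2 ≤ j)).count j)!) *
        (Fintype.card X - (α.parts.filter (fun j => 2 ≤ j)).sum)! := by
  set m := α.parts.filter (fun j => 2 ≤ j) with hm
  set r := Fintype.card X - m.sum with hr
  have hm2 : ∀ j ∈ m, 2 ≤ j := fun j hj => (Multiset.mem_filter.mp hj).2
  have h1mem : (1 : ℕ) ∉ m.toFinset := by
    intro h
    have := hm2 1 (Multiset.mem_toFinset.mp h)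
    omega
  have hK : ∀ t : Multiset ℕ,
      ∏ j ∈ t.toFinset, (j ^ t.count j * (t.count j)!)
        = t.prod * ∏ j ∈ t.toFinset, (t.count j)! := by
    intro t
    rw [Finset.prod_mul_distrib, ← Finset.prod_multiset_count]
  rw [hK]
  have hparts : α.parts = m + Multiset.replicate r 1 := parts_decomp α
  rw [hparts]
  have hprod : (m + Multiset.replicate r 1).prod = m.prod := by
    rw [Multiset.prod_add, Multiset.prod_replicate, one_pow, mul_one]
  rw [hprod]
  rcases Nat.eq_zero_or_pos r with hr0 | hr0
  · rw [hr0]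
    simp
  · have htf : (m + Multiset.replicate r 1).toFinset = insert 1 m.toFinset := by
      rw [Multiset.toFinset_add, Multiset.toFinset_replicate, if_neg (by omega),
        Finset.union_comm, ← Finset.insert_eq]
    have hcount1 : (m + Multiset.replicate r 1).count 1 = r := by
      rw [Multiset.count_add, Multiset.count_replicate_self]
      have h0 : Multiset.count 1 m = 0 := by
        rw [Multiset.count_eq_zero]
        intro h
        have := hm2 1 h
        omega
      omega
    have hcountj : ∀ j ∈ m.toFinset,
        ((m + Multiset.replicate r 1).count j)! = (m.count j)! := by
      intro j hj
      have hj1 : j ≠ 1 := by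
        have := hm2 j (Multiset.mem_toFinset.mp hj)
        omega
      rw [Multiset.count_add, Multiset.count_replicate, if_neg (by omega), add_zero]
    rw [htf, Finset.prod_insert h1mem, hcount1, Finset.prod_congr rfl hcountj]
    ring

lemma claim2 (α : Nat.Partition (Fintype.card X)) :
    Nat.card {σ : Equiv.Perm X // σ.partition = α} *
      ∏ j ∈ α.parts.toFinset, (j ^ α.parts.count j * (α.parts.count j)!)
      = (Fintype.card X)! := by
  set m := α.parts.filter (fun j => 2 ≤ j) with hm
  have hm2 : ∀ j ∈ m, 2 ≤ j := fun j hj => (Multiset.mem_filter.mp hj).2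
  have hsum : m.sum ≤ Fintype.card X := filter_sum_le α
  have hcards : Nat.card {σ : Equiv.Perm X // σ.partition = α}
      = Nat.card {σ : Equiv.Perm X // σ.cycleType = m} :=
    Nat.card_congr (Equiv.subtypeEquivRight (fun σ => partition_eq_iff σ α))
  rw [hcards, K_decomp α, ← mul_assoc]
  exact cycle_type_count m X hm2 hsum

end Bridge


lemma general (X : Type) [Fintype X] [DecidableEq X] (N : ℕ) (hN : Fintype.card X = N) :
    ((Nat.card (Finpartition (univ : Finset X))) : ℚ) =
      ∑ α ∈ (Finset.univ : Finset (Nat.Partition N)),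
        (∏ i ∈ α.parts.toFinset,
            (i : ℚ) ^ (α.parts.count i) * (Nat.factorial (α.parts.count i) : ℚ))⁻¹ *
          (α.parts.count 1 : ℚ) ^ N := by
  subst hN
  have step1 : (Fintype.card X)! * Nat.card (Finpartition (univ : Finset X))
      = ∑ α : Nat.Partition (Fintype.card X),
          Nat.card {σ : Equiv.Perm X // σ.partition = α} * (α.parts.count 1) ^ (Fintype.card X) := by
    rw [claim1, ← Finset.sum_fiberwise univ (fun σ : Equiv.Perm X => σ.partition)
      (fun σ => (Fintype.card X - σ.support.card) ^ (Fintype.card X))]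
    apply Finset.sum_congr rfl
    intro α _
    have hc : ∀ σ ∈ univ.filter (fun σ : Equiv.Perm X => σ.partition = α),
        (Fintype.card X - σ.support.card) ^ (Fintype.card X)
          = (α.parts.count 1) ^ (Fintype.card X) := by
      intro σ hσ
      have hσα := (Finset.mem_filter.mp hσ).2
      rw [← count_one_partition σ, hσα]
    rw [Finset.sum_congr rfl hc, Finset.sum_const, smul_eq_mul]
    congr 1
    rw [Nat.card_eq_fintype_card, Fintype.card_subtype]
  have hfact : ((Fintype.card X)! : ℚ) ≠ 0 :=
    Nat.cast_ne_zero.mpr (Nat.factorial_ne_zero _)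
  have hterm : ∀ α : Nat.Partition (Fintype.card X),
      (∏ i ∈ α.parts.toFinset,
          (i : ℚ) ^ (α.parts.count i) * (Nat.factorial (α.parts.count i) : ℚ))⁻¹ *
        (α.parts.count 1 : ℚ) ^ (Fintype.card X)
      = ((Nat.card {σ : Equiv.Perm X // σ.partition = α} * (α.parts.count 1) ^ (Fintype.card X) : ℕ) : ℚ)
          / ((Fintype.card X)! : ℚ) := by
    intro α
    have hcast : ((∏ j ∈ α.parts.toFinset, (j ^ α.parts.count j * (α.parts.count j)!) : ℕ) : ℚ)
        = ∏ i ∈ α.parts.toFinset,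
            (i : ℚ) ^ (α.parts.count i) * (Nat.factorial (α.parts.count i) : ℚ) := by
      push_cast
      rfl
    have h2q : ((Nat.card {σ : Equiv.Perm X // σ.partition = α} : ℕ) : ℚ) *
        (∏ i ∈ α.parts.toFinset,
          (i : ℚ) ^ (α.parts.count i) * (Nat.factorial (α.parts.count i) : ℚ))
        = ((Fintype.card X)! : ℚ) := by
      rw [← hcast, ← Nat.cast_mul, claim2 α]
    have hK0 : (∏ i ∈ α.parts.toFinset,
        (i : ℚ) ^ (α.parts.count i) * (Nat.factorial (α.parts.count i) : ℚ)) ≠ 0 := by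
      intro h0
      rw [h0, mul_zero] at h2q
      exact hfact h2q.symm
    push_cast
    rw [eq_div_iff hfact, ← h2q]
    field_simp
  rw [Finset.sum_congr rfl (fun α _ => hterm α), ← Finset.sum_div]
  rw [← Nat.cast_sum, ← step1]
  push_cast
  rw [mul_comm, mul_div_assoc, div_self hfact, mul_one]

end BellProof

/-- **Partition-sum formula for the Bell numbers:** for `n ≥ 1`,
`B_n = ∑_{α ∈ P_n} h(β(α)) · β₁(α)^n`, where `β₁(α)` is the number of parts of
`α` equal to `1` and `h(β) = (∏ i, i^{β_i} β_i!)⁻¹`. -/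
theorem bell_eq_partition_sum (n : ℕ) (hn : 1 ≤ n) :
    (bell n : ℚ) =
      ∑ α ∈ (Finset.univ : Finset (Nat.Partition n)),
        (∏ i ∈ α.parts.toFinset,
            (i : ℚ) ^ (α.parts.count i) * (Nat.factorial (α.parts.count i) : ℚ))⁻¹ *
          (α.parts.count 1 : ℚ) ^ n := by
  have h := general (Fin n) n (Fintype.card_fin n)
  rw [bell, h]
end

section
/- Let r_l(n) denote the number of partitions of n with exactly l different part sizes. Then for n ≥ 1 and l ≥ 1, n·r_l(n) = Σ_{d=1}^n d · Σ_{j=1}^l (-1)^{j+1} Σ_{i=1}^{⌊n/d⌋} C(i,j)·r_{l-j}(n - i·d), with r_0(0) = 1 and r_l(n) = 0 if n = 0, l ≥ 1, or n ≥ 1, l = 0. -/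
open Finset

/-- `r l n`: the number of partitions of `n` with exactly `l` different part
sizes (multisets of positive integers summing to `n` whose set of distinct
values has cardinality `l`).  In particular `r 0 0 = 1`, `r l 0 = 0` for
`l ≥ 1`, and `r 0 n = 0` for `n ≥ 1`. -/
noncomputable def numPartitionsDistinctSizes (l n : ℕ) : ℕ :=
  Nat.card {s : Multiset ℕ //
    (∀ x ∈ s, 1 ≤ x) ∧ s.sum = n ∧ s.toFinset.card = l}

/-- Partitions of `n` with exactly `l` distinct part sizes, as a `Finset`. -/
private def auxP (l n : ℕ) : Finset (Nat.Partition n) :=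
  univ.filter fun p => p.parts.toFinset.card = l

/-- Partitions of `m` with exactly `t` distinct part sizes avoiding `d`. -/
private def auxQ (d t m : ℕ) : Finset (Nat.Partition m) :=
  univ.filter fun p => p.parts.toFinset.card = t ∧ d ∉ p.parts

private lemma r_eq (l n : ℕ) : numPartitionsDistinctSizes l n = (auxP l n).card := by
  rw [numPartitionsDistinctSizes]
  have e : {s : Multiset ℕ // (∀ x ∈ s, 1 ≤ x) ∧ s.sum = n ∧ s.toFinset.card = l}
      ≃ {p : Nat.Partition n // p.parts.toFinset.card = l} :=
    { toFun := fun s => ⟨⟨s.1, fun hi => s.2.1 _ hi, s.2.2.1⟩, s.2.2.2⟩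
      invFun := fun p => ⟨p.1.parts, fun x hx => p.1.parts_pos hx, p.1.parts_sum, p.2⟩
      left_inv := fun s => rfl
      right_inv := fun p => rfl }
  rw [Nat.card_congr e, Nat.card_eq_fintype_card, Fintype.card_subtype]
  rfl

private lemma filter_sum (d : ℕ) (s : Multiset ℕ) :
    (s.filter (· ≠ d)).sum = s.sum - s.count d * d := by
  have h := Multiset.filter_add_not (· = d) s
  have h2 : (s.filter (· = d)) = Multiset.replicate (s.count d) d := by
    rw [Multiset.filter_eq']
  have h3 : s.sum = s.count d * d + (s.filter (fun a => ¬ a = d)).sum := by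
    conv_lhs => rw [← h]
    rw [Multiset.sum_add, h2, Multiset.sum_replicate, smul_eq_mul]
  simp only [ne_eq]
  omega

private lemma count_card (d k t m : ℕ) (hd : 1 ≤ d) (hk : 1 ≤ k) (hkd : k * d ≤ m) :
    ((auxP (t + 1) m).filter fun p => p.parts.count d = k).card
      = (auxQ d t (m - k * d)).card := by
  have hsum : ∀ p : Nat.Partition m, p.parts.count d = k →
      (p.parts.filter (· ≠ d)).sum = m - k * d := by
    intro p hc
    rw [filter_sum, hc, p.parts_sum]
  apply Finset.card_bij
    (fun p hp => (⟨p.parts.filter (· ≠ d),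
      fun hi => p.parts_pos (Multiset.mem_of_mem_filter hi),
      hsum p (by simpa [auxP] using (Finset.mem_filter.mp hp).2)⟩ : Nat.Partition (m - k*d)))
  · -- maps to auxQ
    intro p hp
    simp only [auxP, auxQ, Finset.mem_filter, Finset.mem_univ, true_and] at hp ⊢
    obtain ⟨hcard, hcount⟩ := hp
    have hdmem : d ∈ p.parts.toFinset := by
      rw [Multiset.mem_toFinset, ← Multiset.count_pos, hcount]; omega
    constructor
    · rw [Multiset.toFinset_filter, Finset.filter_ne', Finset.card_erase_of_mem hdmem, hcard]
      omega
    · simp [Multiset.mem_filter]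
  · -- injective
    intro p₁ h₁ p₂ h₂ heq
    simp only [auxP, Finset.mem_filter, Finset.mem_univ, true_and] at h₁ h₂
    have heq' : p₁.parts.filter (· ≠ d) = p₂.parts.filter (· ≠ d) :=
      congrArg Nat.Partition.parts heq
    apply Nat.Partition.ext
    have e1 := Multiset.filter_add_not (· = d) p₁.parts
    have e2 := Multiset.filter_add_not (· = d) p₂.parts
    rw [Multiset.filter_eq', h₁.2] at e1
    rw [Multiset.filter_eq', h₂.2] at e2
    calc p₁.parts = Multiset.replicate k d + p₁.parts.filter (fun a => ¬ a = d) := e1.symm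
      _ = Multiset.replicate k d + p₂.parts.filter (fun a => ¬ a = d) := by
          simp only [ne_eq] at heq'
          rw [heq']
      _ = p₂.parts := e2
  · -- surjective
    intro q hq
    simp only [auxQ, Finset.mem_filter, Finset.mem_univ, true_and] at hq
    obtain ⟨hcard, hnot⟩ := hq
    refine ⟨⟨q.parts + Multiset.replicate k d, ?_, ?_⟩, ?_, ?_⟩
    · intro i hi
      rcases Multiset.mem_add.mp hi with h | h
      · exact q.parts_pos h
      · rw [Multiset.eq_of_mem_replicate h]; omega
    · rw [Multiset.sum_add, q.parts_sum, Multiset.sum_replicate, smul_eq_mul]; omega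
    · simp only [auxP, Finset.mem_filter, Finset.mem_univ, true_and]
      constructor
      · rw [Multiset.toFinset_add, Multiset.toFinset_replicate]
        rw [if_neg (by omega)]
        rw [Finset.union_comm, ← Finset.insert_eq]
        rw [Finset.card_insert_of_notMem (by simpa [Multiset.mem_toFinset] using hnot), hcard]
      · rw [Multiset.count_add, Multiset.count_replicate, if_pos rfl,
          Multiset.count_eq_zero_of_notMem hnot]
        omega
    · apply Nat.Partition.ext
      show Multiset.filter _ _ = _
      rw [Multiset.filter_add]
      have h1 : Multiset.filter (· ≠ d) q.parts = q.parts := by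
        apply Multiset.filter_eq_self.mpr
        intro a ha
        intro h
        exact hnot (h ▸ ha)
      have h2 : Multiset.filter (· ≠ d) (Multiset.replicate k d) = 0 := by
        apply Multiset.filter_eq_nil.mpr
        intro a ha
        simp [Multiset.eq_of_mem_replicate ha]
      rw [h1, h2, add_zero]

private lemma count_mul_le (d : ℕ) (s : Multiset ℕ) : s.count d * d ≤ s.sum := by
  have h := Multiset.filter_add_not (· = d) s
  have h3 : s.sum = s.count d * d + (s.filter (fun a => ¬ a = d)).sum := by
    conv_lhs => rw [← h]
    rw [Multiset.sum_add, Multiset.filter_eq', Multiset.sum_replicate, smul_eq_mul]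
  omega

private lemma maps_to_count (d m : ℕ) (hd : 1 ≤ d) (p : Nat.Partition m) :
    p.parts.count d ∈ Finset.range (m / d + 1) := by
  rw [Finset.mem_range, Nat.lt_succ_iff, Nat.le_div_iff_mul_le hd]
  exact le_of_le_of_eq (count_mul_le d p.parts) p.parts_sum

private lemma range_split (N : ℕ) : Finset.range (N + 1) = insert 0 (Finset.Icc 1 N) := by
  ext x; simp [Nat.lt_succ_iff]; omega

private lemma fiber_zero (d t m : ℕ) :
    ((auxP t m).filter fun p => p.parts.count d = 0) = auxQ d t m := by
  ext p
  simp [auxP, auxQ, Multiset.count_eq_zero, and_comm]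

set_option maxHeartbeats 1000000 in
private lemma aux_decomp (d t m : ℕ) (hd : 1 ≤ d) :
    ((auxP (t + 1) m).card : ℤ) = (auxQ d (t + 1) m).card
      + ∑ k ∈ Icc 1 (m / d), ((auxQ d t (m - k * d)).card : ℤ) := by
  have h := Finset.card_eq_sum_card_fiberwise
    (f := fun p : Nat.Partition m => p.parts.count d) (s := auxP (t+1) m)
    (t := Finset.range (m / d + 1)) (fun p _ => maps_to_count d m hd p)
  rw [range_split] at h
  rw [Finset.sum_insert (by simp), fiber_zero] at h
  rw [h]
  rw [Nat.cast_add, Nat.cast_sum]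
  congr 1
  apply Finset.sum_congr rfl
  intro k hk
  rw [Finset.mem_Icc] at hk
  rw [count_card d k t m hd hk.1 ((Nat.le_div_iff_mul_le hd).mp hk.2)]

set_option maxHeartbeats 1000000 in
private lemma aux_count_sum (d l n : ℕ) (hd : 1 ≤ d) :
    (∑ p ∈ auxP (l + 1) n, (p.parts.count d : ℤ))
      = ∑ k ∈ Icc 1 (n / d), (k : ℤ) * (auxQ d l (n - k * d)).card := by
  rw [← Finset.sum_fiberwise_of_maps_to (g := fun p : Nat.Partition n => p.parts.count d)
    (t := Finset.range (n / d + 1)) (fun p _ => maps_to_count d n hd p)]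
  rw [range_split, Finset.sum_insert (by simp)]
  have hz : ∑ p ∈ (auxP (l+1) n).filter (fun p => p.parts.count d = 0),
      (p.parts.count d : ℤ) = 0 := by
    apply Finset.sum_eq_zero
    intro p hp
    rw [Finset.mem_filter] at hp
    simp [hp.2]
  rw [hz, zero_add]
  apply Finset.sum_congr rfl
  intro k hk
  rw [Finset.mem_Icc] at hk
  have e : ∀ p ∈ (auxP (l+1) n).filter (fun p => p.parts.count d = k),
      ((p.parts.count d : ℤ)) = (k : ℤ) := by
    intro p hp
    rw [(Finset.mem_filter.mp hp).2]
  rw [Finset.sum_congr rfl e, Finset.sum_const, nsmul_eq_mul, mul_comm,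
    count_card d k l n hd hk.1 ((Nat.le_div_iff_mul_le hd).mp hk.2)]

private lemma parts_sum_Icc (n : ℕ) (p : Nat.Partition n) :
    ∑ d ∈ Icc 1 n, d * p.parts.count d = n := by
  have h := Finset.sum_multiset_map_count p.parts (id)
  rw [Multiset.map_id, p.parts_sum] at h
  have hsub : p.parts.toFinset ⊆ Icc 1 n := by
    intro x hx
    rw [Multiset.mem_toFinset] at hx
    rw [Finset.mem_Icc]
    exact ⟨p.parts_pos hx, le_of_le_of_eq
      (Multiset.single_le_sum (fun _ _ => Nat.zero_le _) x hx) p.parts_sum⟩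
  have hzero : ∀ x ∈ Icc 1 n, x ∉ p.parts.toFinset → x * p.parts.count x = 0 := by
    intro x _ hx
    rw [Multiset.mem_toFinset] at hx
    rw [Multiset.count_eq_zero_of_notMem hx, mul_zero]
  rw [← Finset.sum_subset hsub hzero]
  conv_rhs => rw [h]
  apply Finset.sum_congr rfl
  intro x _
  rw [smul_eq_mul, mul_comm, id]

private lemma hockey (j m : ℕ) (hj : 1 ≤ j) (hm : 1 ≤ m) :
    ∑ i ∈ Icc 1 (m - 1), i.choose j = m.choose (j + 1) := by
  have h := Nat.sum_Icc_choose (m - 1) j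
  rw [Nat.sub_add_cancel hm] at h
  rw [← h]
  symm
  apply Finset.sum_subset
  · intro x hx
    rw [Finset.mem_Icc] at hx ⊢
    omega
  · intro x hx1 hx2
    rw [Finset.mem_Icc] at hx1 hx2
    exact Nat.choose_eq_zero_of_lt (by omega)

private lemma reindex (N j : ℕ) (hj : 1 ≤ j) (g : ℕ → ℤ) :
    ∑ i ∈ Icc 1 N, (i.choose j : ℤ) * ∑ k ∈ Icc 1 (N - i), g (i + k)
      = ∑ m ∈ Icc 1 N, (m.choose (j + 1) : ℤ) * g m := by
  have step1 : ∀ i ∈ Icc 1 N, (∑ k ∈ Icc 1 (N - i), g (i + k))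
      = ∑ m ∈ Icc 1 N, if i < m then g m else 0 := by
    intro i hi
    rw [Finset.mem_Icc] at hi
    rw [← Finset.sum_filter]
    have : Finset.filter (fun m => i < m) (Icc 1 N) = Icc (i + 1) N := by
      ext x; simp only [Finset.mem_filter, Finset.mem_Icc]; omega
    rw [this]
    have : Icc (i + 1) N = (Icc 1 (N - i)).map (addLeftEmbedding i) := by
      rw [Finset.map_add_left_Icc]
      congr 1
      omega
    rw [this, Finset.sum_map]
    rfl
  rw [Finset.sum_congr rfl (fun i hi => by rw [step1 i hi])]
  rw [Finset.sum_congr rfl (fun i _ => Finset.mul_sum _ _ _)]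
  rw [Finset.sum_comm]
  apply Finset.sum_congr rfl
  intro m hm
  rw [Finset.mem_Icc] at hm
  have : ∀ i ∈ Icc 1 N, (i.choose j : ℤ) * (if i < m then g m else 0)
      = if i < m then (i.choose j : ℤ) * g m else 0 := by
    intro i _; split <;> simp
  rw [Finset.sum_congr rfl this, ← Finset.sum_filter]
  have : Finset.filter (fun i => i < m) (Icc 1 N) = Icc 1 (m - 1) := by
    ext x; simp only [Finset.mem_filter, Finset.mem_Icc]; omega
  rw [this, ← Finset.sum_mul, ← Nat.cast_sum, hockey j m hj hm.1]

private lemma telescope (G : ℕ → ℤ) (l : ℕ) :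
    ∑ j ∈ Icc 1 l, (-1 : ℤ) ^ (j + 1) * (G j + G (j + 1))
      = G 1 - (-1 : ℤ) ^ l * G (l + 1) := by
  induction l with
  | zero => simp
  | succ l ih =>
    rw [Finset.sum_Icc_succ_top (by omega : 1 ≤ l + 1), ih]
    ring

private lemma stepA (d n u j : ℕ) (hd : 1 ≤ d) (hj : 1 ≤ j) :
    ∑ i ∈ Icc 1 (n / d), (i.choose j : ℤ) * ((auxP (u + 1) (n - i * d)).card : ℤ)
      = ∑ i ∈ Icc 1 (n / d), (i.choose j : ℤ) * ((auxQ d (u + 1) (n - i * d)).card : ℤ)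
        + ∑ m ∈ Icc 1 (n / d), (m.choose (j + 1) : ℤ) * ((auxQ d u (n - m * d)).card : ℤ) := by
  have expand : ∀ i ∈ Icc 1 (n / d),
      (i.choose j : ℤ) * ((auxP (u + 1) (n - i * d)).card : ℤ)
        = (i.choose j : ℤ) * ((auxQ d (u + 1) (n - i * d)).card : ℤ)
          + (i.choose j : ℤ) *
              ∑ k ∈ Icc 1 (n / d - i), ((auxQ d u (n - (i + k) * d)).card : ℤ) := by
    intro i hi
    rw [Finset.mem_Icc] at hi
    have hid : i * d ≤ n := (Nat.le_div_iff_mul_le hd).mp hi.2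
    have hdiv : (n - i * d) / d = n / d - i := by
      rw [mul_comm i d]
      exact Nat.sub_mul_div n d i
    rw [aux_decomp d u (n - i * d) hd, mul_add, hdiv]
    congr 1
    congr 1
    apply Finset.sum_congr rfl
    intro k _
    have hs : n - i * d - k * d = n - (i + k) * d := by
      rw [Nat.sub_sub, ← add_mul]
    rw [hs]
  rw [Finset.sum_congr rfl expand, Finset.sum_add_distrib]
  congr 1
  exact reindex (n / d) j hj (fun m => ((auxQ d u (n - m * d)).card : ℤ))

private lemma auxP_zero (d m : ℕ) : auxP 0 m = auxQ d 0 m := by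
  ext p
  simp only [auxP, auxQ, Finset.mem_filter, Finset.mem_univ, true_and]
  constructor
  · intro h
    refine ⟨h, ?_⟩
    have : p.parts = 0 := by
      rw [← Multiset.toFinset_eq_empty, ← Finset.card_eq_zero]
      exact h
    rw [this]
    simp
  · exact fun h => h.1

private lemma per_d (d n l : ℕ) (hd : 1 ≤ d) (hl : 1 ≤ l) :
    ∑ j ∈ Icc 1 l, (-1 : ℤ) ^ (j + 1) *
        ∑ i ∈ Icc 1 (n / d), (i.choose j : ℤ) * ((auxP (l - j) (n - i * d)).card : ℤ)
      = ∑ i ∈ Icc 1 (n / d), (i : ℤ) * ((auxQ d (l - 1) (n - i * d)).card : ℤ) := by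
  set G : ℕ → ℤ := fun j => if j ≤ l then
    ∑ i ∈ Icc 1 (n / d), (i.choose j : ℤ) * ((auxQ d (l - j) (n - i * d)).card : ℤ)
    else 0 with hG
  have key : ∀ j ∈ Icc 1 l,
      (∑ i ∈ Icc 1 (n / d), (i.choose j : ℤ) * ((auxP (l - j) (n - i * d)).card : ℤ))
        = G j + G (j + 1) := by
    intro j hj
    rw [Finset.mem_Icc] at hj
    have h1 : G j = ∑ i ∈ Icc 1 (n / d),
        (i.choose j : ℤ) * ((auxQ d (l - j) (n - i * d)).card : ℤ) := if_pos hj.2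
    by_cases hjl : j < l
    · have hu : l - j = (l - j - 1) + 1 := by omega
      have h2 : G (j + 1) = ∑ i ∈ Icc 1 (n / d),
          (i.choose (j + 1) : ℤ) * ((auxQ d (l - (j + 1)) (n - i * d)).card : ℤ) :=
        if_pos (by omega)
      have hu2 : l - (j + 1) = l - j - 1 := by omega
      rw [h1, h2, hu2]
      have h3 := stepA d n (l - j - 1) j hd hj.1
      rw [← hu] at h3
      exact h3
    · have h2 : G (j + 1) = 0 := if_neg (by omega)
      have h0 : l - j = 0 := by omega
      rw [h1, h2, add_zero, h0]
      apply Finset.sum_congr rfl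
      intro i _
      rw [auxP_zero d]
  rw [Finset.sum_congr rfl (fun j hj => by rw [key j hj])]
  rw [telescope G l]
  have h2 : G (l + 1) = 0 := if_neg (by omega)
  have h1 : G 1 = ∑ i ∈ Icc 1 (n / d),
      (i.choose 1 : ℤ) * ((auxQ d (l - 1) (n - i * d)).card : ℤ) := if_pos hl
  rw [h2, mul_zero, sub_zero, h1]
  apply Finset.sum_congr rfl
  intro i _
  rw [Nat.choose_one_right]

/-- **Recursion for `r_l(n)`:** for `n ≥ 1` and `l ≥ 1`,
`n·r_l(n) = ∑_{d=1}^n d ∑_{j=1}^l (-1)^{j+1} ∑_{i=1}^{⌊n/d⌋} C(i,j)·r_{l-j}(n-i·d)`. -/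
theorem numPartitionsDistinctSizes_recursion (n l : ℕ) (hn : 1 ≤ n) (hl : 1 ≤ l) :
    (n : ℤ) * numPartitionsDistinctSizes l n =
      ∑ d ∈ Finset.Icc 1 n, (d : ℤ) *
        ∑ j ∈ Finset.Icc 1 l, (-1 : ℤ) ^ (j + 1) *
          ∑ i ∈ Finset.Icc 1 (n / d),
            (i.choose j : ℤ) * numPartitionsDistinctSizes (l - j) (n - i * d) := by
  simp only [r_eq]
  have inner : ∀ p : Nat.Partition n,
      ∑ d ∈ Icc 1 n, (d : ℤ) * (p.parts.count d : ℤ) = (n : ℤ) := by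
    intro p
    have h := parts_sum_Icc n p
    calc ∑ d ∈ Icc 1 n, (d : ℤ) * (p.parts.count d : ℤ)
        = ((∑ d ∈ Icc 1 n, d * p.parts.count d : ℕ) : ℤ) := by push_cast; rfl
      _ = (n : ℤ) := by rw [h]
  have lhs : (n : ℤ) * ((auxP l n).card : ℤ)
      = ∑ d ∈ Icc 1 n, (d : ℤ) * ∑ p ∈ auxP l n, (p.parts.count d : ℤ) := by
    have hms : ∀ d ∈ Icc 1 n, (d : ℤ) * ∑ p ∈ auxP l n, (p.parts.count d : ℤ)
        = ∑ p ∈ auxP l n, (d : ℤ) * (p.parts.count d : ℤ) :=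
      fun d _ => Finset.mul_sum _ _ _
    rw [Finset.sum_congr rfl hms, Finset.sum_comm]
    rw [Finset.sum_congr rfl (fun p _ => inner p)]
    rw [Finset.sum_const, nsmul_eq_mul, mul_comm]
  rw [lhs]
  apply Finset.sum_congr rfl
  intro d hd
  rw [Finset.mem_Icc] at hd
  congr 1
  have hl1 : l = (l - 1) + 1 := by omega
  have hcs := aux_count_sum d (l - 1) n hd.1
  rw [← hl1] at hcs
  rw [hcs, ← per_d d n l hd.1 hl]
end
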